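/- arXiv:1308.0425 — 6 statements merged into one kernel-verified Lean document; each statement's English description precedes it below -/
import Mathlib

section
/- If n ≥ 2 and K : ℝⁿ → ℝ is a bounded C¹ function with bounded gradient, then for every ξ ∈ ℝⁿ the following equivalence holds: ∇K(ξ) = 0 if and only if the full gradient of Γ (in the n+1 variables (μ, ξ)) vanishes at (0, ξ). -/
open MeasureTheory
open scoped RealInnerProductSpace

noncomputable def z0 (n : ℕ) (γ α : ℝ) (y : EuclideanSpace ℝ (Fin n)) : ℝ :=
  α * (1 + ‖y‖ ^ 2) ^ (-(((n : ℝ) - 2 * γ) / 2))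

noncomputable def Gam (n : ℕ) (γ α p : ℝ) (K : EuclideanSpace ℝ (Fin n) → ℝ)
    (μ : ℝ) (ξ : EuclideanSpace ℝ (Fin n)) : ℝ :=
  (1 / (p + 1)) * ∫ y, K (μ • y + ξ) * z0 n γ α y ^ (p + 1)

-- aux lemmas about g y = z0 ^ (p+1)
section aux
variable {n : ℕ} {γ α p : ℝ}

lemma g_eq (hn : 2 ≤ n) (hγ : 0 < γ) (hγn : γ < (n : ℝ) / 2)
    (hp : p = ((n : ℝ) + 2 * γ) / ((n : ℝ) - 2 * γ)) (hα : 0 < α)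
    (y : EuclideanSpace ℝ (Fin n)) :
    z0 n γ α y ^ (p + 1) = α ^ (p + 1) * (1 + ‖y‖ ^ 2) ^ (-(n : ℝ)) := by
  have hden : (0 : ℝ) < (n : ℝ) - 2 * γ := by linarith
  have hb : (0 : ℝ) < 1 + ‖y‖ ^ 2 := by positivity
  unfold z0
  rw [Real.mul_rpow hα.le (Real.rpow_nonneg hb.le _),← Real.rpow_mul hb.le]
  have he : (-(((n : ℝ) - 2 * γ) / 2)) * (p + 1) = -(n : ℝ) := by
    rw [hp]; field_simp; ring
  rw [he]


lemma g_pos (hγn : γ < (n : ℝ) / 2) (hα : 0 < α) (y : EuclideanSpace ℝ (Fin n)) :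
    0 < z0 n γ α y ^ (p + 1) := by
  have : 0 < z0 n γ α y := by
    unfold z0
    have : (0:ℝ) < 1 + ‖y‖ ^ 2 := by positivity
    positivity
  exact Real.rpow_pos_of_pos this _

lemma g_cont (hn : 2 ≤ n) (hγ : 0 < γ) (hγn : γ < (n : ℝ) / 2)
    (hp : p = ((n : ℝ) + 2 * γ) / ((n : ℝ) - 2 * γ)) (hα : 0 < α) :
    Continuous fun y : EuclideanSpace ℝ (Fin n) => z0 n γ α y ^ (p + 1) := by
  have : (fun y : EuclideanSpace ℝ (Fin n) => z0 n γ α y ^ (p + 1))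
      = fun y => α ^ (p + 1) * (1 + ‖y‖ ^ 2) ^ (-(n : ℝ)) :=
    funext fun y => g_eq hn hγ hγn hp hα y
  rw [this]
  refine continuous_const.mul ?_
  refine Continuous.rpow_const (by continuity) fun y => Or.inl ?_
  positivity

lemma g_key (hn : 2 ≤ n) (hγ : 0 < γ) (hγn : γ < (n : ℝ) / 2)
    (hp : p = ((n : ℝ) + 2 * γ) / ((n : ℝ) - 2 * γ)) (hα : 0 < α)
    (y : EuclideanSpace ℝ (Fin n)) :
    (1 + ‖y‖) * z0 n γ α y ^ (p + 1)
      ≤ (α ^ (p + 1) * 2 ^ n) * (1 + ‖y‖) ^ (1 - 2 * (n : ℝ)) := by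
  rw [g_eq hn hγ hγn hp hα y]
  set t := ‖y‖ with ht
  have ht0 : 0 ≤ t := norm_nonneg y
  have h1 : (0:ℝ) < 1 + t := by linarith
  have h2 : (0:ℝ) < 1 + t ^ 2 := by positivity
  have hPA : (0:ℝ) < (1 + t ^ 2) ^ n := pow_pos h2 n
  have hPB : (0:ℝ) < (1 + t) ^ (2 * n) := pow_pos h1 _
  have hB : (1 + t) ^ (2 * n) ≤ 2 ^ n * (1 + t ^ 2) ^ n := by
    rw [pow_mul, ← mul_pow]
    exact pow_le_pow_left₀ (by positivity) (by nlinarith [sq_nonneg (t - 1)]) n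
  have hrw1 : (1 + t ^ 2) ^ (-(n:ℝ)) = ((1 + t ^ 2) ^ n)⁻¹ := by
    rw [Real.rpow_neg h2.le, Real.rpow_natCast]
  have hrw2 : (1 + t) ^ (1 - 2 * (n:ℝ)) = (1 + t) * ((1 + t) ^ (2 * n))⁻¹ := by
    rw [show (1 - 2 * (n:ℝ)) = 1 + -(((2 * n : ℕ) : ℝ)) by push_cast; ring,
      Real.rpow_add h1, Real.rpow_one, Real.rpow_neg h1.le, Real.rpow_natCast]
  have key : ((1 + t) * α ^ (p + 1)) / ((1 + t ^ 2) ^ n)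
      ≤ (α ^ (p + 1) * 2 ^ n * (1 + t)) / ((1 + t) ^ (2 * n)) := by
    rw [div_le_div_iff₀ hPA hPB]
    have h3 := mul_le_mul_of_nonneg_left hB
      (by positivity : (0:ℝ) ≤ (1 + t) * α ^ (p + 1))
    nlinarith [h3]
  calc (1 + t) * (α ^ (p + 1) * (1 + t ^ 2) ^ (-(n:ℝ)))
      = ((1 + t) * α ^ (p + 1)) / ((1 + t ^ 2) ^ n) := by rw [hrw1]; ring
    _ ≤ (α ^ (p + 1) * 2 ^ n * (1 + t)) / ((1 + t) ^ (2 * n)) := key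
    _ = (α ^ (p + 1) * 2 ^ n) * (1 + t) ^ (1 - 2 * (n:ℝ)) := by rw [hrw2]; ring

lemma g_int1 (hn : 2 ≤ n) (hγ : 0 < γ) (hγn : γ < (n : ℝ) / 2)
    (hp : p = ((n : ℝ) + 2 * γ) / ((n : ℝ) - 2 * γ)) (hα : 0 < α) :
    Integrable (fun y : EuclideanSpace ℝ (Fin n) =>
      (1 + ‖y‖) * z0 n γ α y ^ (p + 1)) := by
  have hnr : (Module.finrank ℝ (EuclideanSpace ℝ (Fin n)) : ℝ) < 2 * (n : ℝ) - 1 := by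
    have h2 : (2:ℝ) ≤ (n:ℝ) := by exact_mod_cast hn
    simp only [finrank_euclideanSpace, Fintype.card_fin]
    linarith
  have hint := (integrable_one_add_norm (E := EuclideanSpace ℝ (Fin n)) (μ := volume) hnr).const_mul
    (α ^ (p + 1) * 2 ^ n)
  refine hint.mono' ?_ (Filter.Eventually.of_forall fun y => ?_)
  · exact (((continuous_const.add continuous_norm).mul
      (g_cont hn hγ hγn hp hα))).aestronglyMeasurable
  · have hpos : 0 < (1 + ‖y‖) * z0 n γ α y ^ (p + 1) :=
      mul_pos (by positivity) (g_pos hγn hα y)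
    rw [Real.norm_of_nonneg hpos.le]
    have := g_key hn hγ hγn hp hα y
    rwa [show -(2 * (n:ℝ) - 1) = 1 - 2 * (n:ℝ) by ring]

lemma g_int (hn : 2 ≤ n) (hγ : 0 < γ) (hγn : γ < (n : ℝ) / 2)
    (hp : p = ((n : ℝ) + 2 * γ) / ((n : ℝ) - 2 * γ)) (hα : 0 < α) :
    Integrable (fun y : EuclideanSpace ℝ (Fin n) => z0 n γ α y ^ (p + 1)) := by
  refine (g_int1 hn hγ hγn hp hα).mono' (g_cont hn hγ hγn hp hα).aestronglyMeasurable
    (Filter.Eventually.of_forall fun y => ?_)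
  have hpos := g_pos (p := p) hγn hα y
  rw [Real.norm_of_nonneg hpos.le]
  nlinarith [norm_nonneg y, hpos]

end aux

set_option maxHeartbeats 1000000 in
/-- The full gradient of `Γ` in the `n+1` variables `(μ, ξ)` vanishes at `(0, ξ)`
iff `∇K(ξ) = 0`; vanishing of the gradient is expressed as vanishing of the
Fréchet derivative of the uncurried function. -/
theorem stmt3 (n : ℕ) (hn : 2 ≤ n) (γ : ℝ) (hγ : 0 < γ) (hγn : γ < (n : ℝ) / 2)
    (p : ℝ) (hp : p = ((n : ℝ) + 2 * γ) / ((n : ℝ) - 2 * γ))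
    (α : ℝ) (hα : 0 < α)
    (K : EuclideanSpace ℝ (Fin n) → ℝ) (hK : ContDiff ℝ 1 K)
    (hKb : ∃ C, ∀ x, |K x| ≤ C)
    (hKgb : ∃ C, ∀ x, ‖gradient K x‖ ≤ C)
    (ξ : EuclideanSpace ℝ (Fin n)) :
    gradient K ξ = 0 ↔
      fderiv ℝ (fun q : ℝ × EuclideanSpace ℝ (Fin n) => Gam n γ α p K q.1 q.2) (0, ξ) = 0 := by
  obtain ⟨Cg, hCg⟩ := hKgb
  have hCg0 : 0 ≤ Cg := le_trans (norm_nonneg _) (hCg 0)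
  have hden : (0:ℝ) < (n:ℝ) - 2*γ := by linarith
  have hp0 : 0 < p := by
    rw [hp]
    exact div_pos (by have : (0:ℝ) ≤ (n:ℝ) := Nat.cast_nonneg n; linarith) hden
  have hp1 : (0:ℝ) < p + 1 := by linarith
  set g : EuclideanSpace ℝ (Fin n) → ℝ := fun y => z0 n γ α y ^ (p + 1) with hgdef
  set A : EuclideanSpace ℝ (Fin n) →
      ((ℝ × EuclideanSpace ℝ (Fin n)) →L[ℝ] EuclideanSpace ℝ (Fin n)) :=
    fun y => (ContinuousLinearMap.fst ℝ ℝ (EuclideanSpace ℝ (Fin n))).smulRight y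
      + ContinuousLinearMap.snd ℝ ℝ (EuclideanSpace ℝ (Fin n)) with hAdef
  have hAapp : ∀ y q, A y q = q.1 • y + q.2 := by
    intro y q
    simp [hAdef]
  have hAle : ∀ y, ‖A y‖ ≤ 1 + ‖y‖ := by
    intro y
    refine le_trans (norm_add_le _ _) ?_
    have h1 : ‖(ContinuousLinearMap.fst ℝ ℝ (EuclideanSpace ℝ (Fin n))).smulRight y‖ ≤ ‖y‖ := by
      rw [ContinuousLinearMap.norm_smulRight_apply]
      calc ‖ContinuousLinearMap.fst ℝ ℝ (EuclideanSpace ℝ (Fin n))‖ * ‖y‖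
          ≤ 1 * ‖y‖ := mul_le_mul_of_nonneg_right (ContinuousLinearMap.norm_fst_le ..) (norm_nonneg y)
        _ = ‖y‖ := one_mul _
    have h2 : ‖ContinuousLinearMap.snd ℝ ℝ (EuclideanSpace ℝ (Fin n))‖ ≤ 1 :=
      ContinuousLinearMap.norm_snd_le ..
    linarith
  have hAcont : Continuous A := by
    rw [hAdef]
    exact ((ContinuousLinearMap.smulRightL ℝ (ℝ × EuclideanSpace ℝ (Fin n))
      (EuclideanSpace ℝ (Fin n)) (ContinuousLinearMap.fst ℝ ℝ _)).continuous).add continuous_const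
  have hKd : Differentiable ℝ K := hK.differentiable one_ne_zero
  have hfd_norm : ∀ x, ‖fderiv ℝ K x‖ ≤ Cg := by
    intro x
    have hnormeq : ‖gradient K x‖ = ‖fderiv ℝ K x‖ := by
      unfold gradient
      exact LinearIsometryEquiv.norm_map _ _
    rw [← hnormeq]; exact hCg x
  set F' : (ℝ × EuclideanSpace ℝ (Fin n)) → EuclideanSpace ℝ (Fin n) →
      ((ℝ × EuclideanSpace ℝ (Fin n)) →L[ℝ] ℝ) :=
    fun q y => g y • ((fderiv ℝ K (q.1 • y + q.2)).comp (A y)) with hF'def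
  have hbnd : ∀ q y, ‖F' q y‖ ≤ Cg * ((1 + ‖y‖) * g y) := by
    intro q y
    have hgp : 0 < g y := g_pos hγn hα y
    calc ‖F' q y‖ = g y * ‖(fderiv ℝ K (q.1 • y + q.2)).comp (A y)‖ := by
          have hns := norm_smul (g y) ((fderiv ℝ K (q.1 • y + q.2)).comp (A y))
          rw [show F' q y = g y • (fderiv ℝ K (q.1 • y + q.2)).comp (A y) from rfl, hns,
            Real.norm_of_nonneg hgp.le]
      _ ≤ g y * (Cg * (1 + ‖y‖)) := by
          refine mul_le_mul_of_nonneg_left ?_ hgp.le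
          refine le_trans (ContinuousLinearMap.opNorm_comp_le _ _) ?_
          exact mul_le_mul (hfd_norm _) (hAle y) (norm_nonneg _) hCg0
      _ = Cg * ((1 + ‖y‖) * g y) := by ring
  have hF'0 : F' (0, ξ) = fun y => g y • ((fderiv ℝ K ξ).comp (A y)) := by
    funext y
    simp [hF'def]
  have hF'0cont : Continuous (F' (0, ξ)) := by
    rw [hF'0]
    exact (g_cont hn hγ hγn hp hα).smul (Continuous.clm_comp continuous_const hAcont)
  have hIF' : Integrable (F' (0, ξ)) := by
    refine ((g_int1 hn hγ hγn hp hα).const_mul Cg).mono' hF'0cont.aestronglyMeasurable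
      (Filter.Eventually.of_forall fun y => ?_)
    exact hbnd (0, ξ) y
  have main0 : HasFDerivAt
      (fun q : ℝ × EuclideanSpace ℝ (Fin n) => ∫ y, K (q.1 • y + q.2) * g y)
      (∫ y, F' (0, ξ) y) (0, ξ) := by
    refine hasFDerivAt_integral_of_dominated_of_fderiv_le (bound := fun y => Cg * ((1 + ‖y‖) * g y))
      (s := Metric.ball (0, ξ) 1) (Metric.ball_mem_nhds _ one_pos) (Filter.Eventually.of_forall fun q => ?_) ?_
      hIF'.aestronglyMeasurable (Filter.Eventually.of_forall fun y => fun q _ => hbnd q y)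
      ((g_int1 hn hγ hγn hp hα).const_mul Cg)
      (Filter.Eventually.of_forall fun y => fun q _ => ?_)
    · exact ((hK.continuous.comp ((continuous_const_smul q.1).add continuous_const)).mul
        (g_cont hn hγ hγn hp hα)).aestronglyMeasurable
    · have : Integrable (fun y => K ξ * g y) := (g_int hn hγ hγn hp hα).const_mul (K ξ)
      refine this.congr (Filter.Eventually.of_forall fun y => ?_)
      simp
    · have hA : HasFDerivAt (fun q : ℝ × EuclideanSpace ℝ (Fin n) => q.1 • y + q.2) (A y) q := by
        have h := (A y).hasFDerivAt (x := q)
        refine h.congr_of_eventuallyEq (Filter.Eventually.of_forall fun q' => ?_)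
        rw [hAapp]
      have hKder := (hKd (q.1 • y + q.2)).hasFDerivAt
      exact (hKder.comp q hA).mul_const (g y)
  have hGam : (fun q : ℝ × EuclideanSpace ℝ (Fin n) => Gam n γ α p K q.1 q.2)
      = fun q : ℝ × EuclideanSpace ℝ (Fin n) =>
        (1 / (p + 1)) * ∫ y, K (q.1 • y + q.2) * g y := rfl
  have main : HasFDerivAt (fun q : ℝ × EuclideanSpace ℝ (Fin n) => Gam n γ α p K q.1 q.2)
      ((1 / (p + 1)) • ∫ y, F' (0, ξ) y) (0, ξ) := by
    rw [hGam]
    exact main0.const_mul (1 / (p + 1))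
  have hfder : fderiv ℝ (fun q : ℝ × EuclideanSpace ℝ (Fin n) => Gam n γ α p K q.1 q.2) (0, ξ)
      = (1 / (p + 1)) • ∫ y, F' (0, ξ) y := main.fderiv
  constructor
  · intro h
    have hfK : fderiv ℝ K ξ = 0 := by
      have h2 : fderiv ℝ K ξ = (InnerProductSpace.toDual ℝ _) (gradient K ξ) := by
        unfold gradient
        rw [LinearIsometryEquiv.apply_symm_apply]
      rw [h2, h, map_zero]
    have hz : ∀ y, F' (0, ξ) y = 0 := by
      intro y
      rw [hF'0]
      simp [hfK]
    rw [hfder]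
    simp only [hz, integral_zero, smul_zero]
  · intro h
    set w := gradient K ξ with hw
    rw [h] at hfder
    have hI0 : (∫ y, F' (0, ξ) y) = 0 := by
      rcases smul_eq_zero.mp hfder.symm with h1 | h1
      · exact absurd h1 (by positivity)
      · exact h1
    have happ : (∫ y, (F' (0, ξ) y) ((0:ℝ), w)) = 0 := by
      rw [← ContinuousLinearMap.integral_apply hIF', hI0, ContinuousLinearMap.zero_apply]
    have heval : ∀ y, (F' (0, ξ) y) ((0:ℝ), w) = g y * ‖w‖ ^ 2 := by
      intro y
      have hfw : fderiv ℝ K ξ w = ‖w‖ ^ 2 := by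
        have := InnerProductSpace.toDual_symm_apply (𝕜 := ℝ)
          (y := fderiv ℝ K ξ) (x := w)
        rw [show ((InnerProductSpace.toDual ℝ _).symm (fderiv ℝ K ξ)) = w from rfl] at this
        rw [← this, real_inner_self_eq_norm_sq]
      rw [hF'0]
      simp only [ContinuousLinearMap.smul_apply, ContinuousLinearMap.comp_apply, hAapp,
        zero_smul, zero_add, smul_eq_mul]
      rw [hfw]
    have hgint := g_int hn hγ hγn hp hα
    have hIpos : 0 < ∫ y, g y := by
      rw [integral_pos_iff_support_of_nonneg (fun y => (g_pos hγn hα y).le) hgint]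
      have hsupp : Function.support g = Set.univ :=
        Set.eq_univ_of_forall fun y => (g_pos hγn hα y).ne'
      rw [hsupp]
      exact IsOpen.measure_pos volume isOpen_univ Set.univ_nonempty
    have hfinal : (∫ y, g y) * ‖w‖ ^ 2 = 0 := by
      rw [← integral_mul_const]
      rw [← happ]
      exact integral_congr_ae (Filter.Eventually.of_forall fun y => (heval y).symm)
    have hw2 : ‖w‖ ^ 2 = 0 := by
      rcases mul_eq_zero.mp hfinal with h1 | h1
      · exact absurd h1 hIpos.ne'
      · exact h1
    exact norm_eq_zero.mp (pow_eq_zero_iff two_ne_zero |>.mp hw2)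
end

section
/- Assume n ≥ 2 and that K : ℝⁿ → ℝ is a bounded C² function with bounded gradient satisfying: (a) there exists η > 0 such that ⟨∇K(x), x⟩ < 0 whenever |x| ≥ η; (b) the function x ↦ ⟨∇K(x), x⟩ is integrable on ℝⁿ; and (c) ∫_{ℝⁿ} ⟨∇K(x), x⟩ dx < 0. Then there exists R > 0 such that for every (μ, ξ) ∈ ℝ × ℝⁿ with |μ| + |ξ| ≥ R one has ⟨∇Γ(μ, ξ), (μ, ξ)⟩ < 0, where ∇Γ denotes the gradient of Γ in the n+1 variables (μ, ξ). -/
open MeasureTheory Metric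
open scoped RealInnerProductSpace

set_option maxHeartbeats 2000000

noncomputable def C0 (n : ℕ) (s α : ℝ) (y : EuclideanSpace ℝ (Fin n)) : ℝ :=
  α ^ s * ((1 + ‖y‖ ^ 2) ^ n)⁻¹

lemma z0_rpow (n : ℕ) (hn : 2 ≤ n) (γ : ℝ) (hγ : 0 < γ) (hγn : γ < (n : ℝ) / 2)
    (p : ℝ) (hp : p = ((n : ℝ) + 2 * γ) / ((n : ℝ) - 2 * γ)) (α : ℝ) (hα : 0 < α)
    (y : EuclideanSpace ℝ (Fin n)) :
    z0 n γ α y ^ (p + 1) = C0 n (p + 1) α y := by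
  have hB : (0:ℝ) < 1 + ‖y‖ ^ 2 := by positivity
  have hd : (n : ℝ) - 2 * γ ≠ 0 := by
    have : 2 * γ < (n : ℝ) := by linarith
    linarith
  have hts : (-(((n : ℝ) - 2 * γ) / 2)) * (p + 1) = -(n : ℝ) := by
    rw [hp]; field_simp; ring
  rw [z0, C0, Real.mul_rpow hα.le (Real.rpow_nonneg hB.le _),
    ← Real.rpow_natCast (1 + ‖y‖ ^ 2) n, ← Real.rpow_neg hB.le,
    ← Real.rpow_mul hB.le, hts]

section prev
variable {n : ℕ}

lemma C0_pos {n : ℕ} {s α : ℝ} (hα : 0 < α) (y : EuclideanSpace ℝ (Fin n)) :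
    0 < C0 n s α y := by
  have h1 : (0:ℝ) < 1 + ‖y‖ ^ 2 := by positivity
  have h2 := Real.rpow_pos_of_pos hα s
  have h3 : (0:ℝ) < ((1 + ‖y‖ ^ 2) ^ n)⁻¹ := by positivity
  exact mul_pos h2 h3

lemma C0_continuous (n : ℕ) (s α : ℝ) : Continuous (C0 n s α) := by
  apply continuous_const.mul
  apply Continuous.inv₀
  · fun_prop
  · intro y
    have : (0:ℝ) < 1 + ‖y‖ ^ 2 := by positivity
    positivity

lemma C0_le_of_le {n : ℕ} {s α a : ℝ} (hα : 0 < α) {y : EuclideanSpace ℝ (Fin n)}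
    (h : a ≤ ‖y‖) (h0 : 0 ≤ a) : C0 n s α y ≤ α ^ s * ((1 + a ^ 2) ^ n)⁻¹ := by
  have hαs := Real.rpow_pos_of_pos hα s
  apply mul_le_mul_of_nonneg_left _ hαs.le
  apply inv_anti₀ (by positivity)
  apply pow_le_pow_left₀ (by positivity)
  nlinarith [norm_nonneg y]

lemma le_C0_of_le {n : ℕ} {s α b : ℝ} (hα : 0 < α) {y : EuclideanSpace ℝ (Fin n)}
    (h : ‖y‖ ≤ b) : α ^ s * ((1 + b ^ 2) ^ n)⁻¹ ≤ C0 n s α y := by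
  have hαs := Real.rpow_pos_of_pos hα s
  apply mul_le_mul_of_nonneg_left _ hαs.le
  have hb0 : 0 ≤ b := le_trans (norm_nonneg y) h
  apply inv_anti₀ (by positivity)
  apply pow_le_pow_left₀ (by positivity)
  nlinarith [norm_nonneg y]

lemma weight_integrable (n : ℕ) (hn : 2 ≤ n) :
    Integrable (fun y : EuclideanSpace ℝ (Fin n) =>
      (1 + ‖y‖) * ((1 + ‖y‖ ^ 2) ^ n)⁻¹) := by
  have hint : Integrable (fun y : EuclideanSpace ℝ (Fin n) =>
      (2:ℝ) ^ n * (1 + ‖y‖) ^ (-(2 * (n:ℝ) - 1))) := by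
    apply Integrable.const_mul
    apply integrable_one_add_norm
    rw [finrank_euclideanSpace_fin]
    have : (2:ℝ) ≤ (n:ℝ) := by exact_mod_cast hn
    linarith
  apply hint.mono'
  · apply Continuous.aestronglyMeasurable
    apply Continuous.mul (by fun_prop)
    apply Continuous.inv₀ (by fun_prop)
    intro y
    have : (0:ℝ) < 1 + ‖y‖ ^ 2 := by positivity
    positivity
  · filter_upwards with y
    have h1 : (0:ℝ) < 1 + ‖y‖ := by positivity
    have h2 : (0:ℝ) < 1 + ‖y‖ ^ 2 := by positivity
    rw [Real.norm_eq_abs, abs_of_nonneg (by positivity)]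
    have hexp : (1 + ‖y‖) ^ (-(2 * (n:ℝ) - 1)) = ((1 + ‖y‖) ^ (2 * n - 1 : ℕ))⁻¹ := by
      rw [← Real.rpow_natCast (1 + ‖y‖) (2 * n - 1), ← Real.rpow_neg h1.le]
      congr 1
      have : ((2 * n - 1 : ℕ) : ℝ) = 2 * (n:ℝ) - 1 := by
        have h1n : 1 ≤ 2 * n := by omega
        push_cast [Nat.cast_sub h1n]
        ring
      rw [this]
    rw [hexp]
    have key : (1 + ‖y‖) * (1 + ‖y‖) ^ (2 * n - 1 : ℕ) ≤ 2 ^ n * (1 + ‖y‖ ^ 2) ^ n := by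
      have hh : (1 + ‖y‖) * (1 + ‖y‖) ^ (2 * n - 1 : ℕ) = ((1 + ‖y‖) ^ 2) ^ n := by
        rw [← pow_succ', ← pow_mul]
        congr 1
        omega
      rw [hh, ← mul_pow]
      apply pow_le_pow_left₀ (by positivity)
      nlinarith [sq_nonneg (‖y‖ - 1)]
    rw [← div_eq_mul_inv, ← div_eq_mul_inv,
      div_le_div_iff₀ (by positivity) (by positivity)]
    exact key

lemma C0_integrable (n : ℕ) (hn : 2 ≤ n) (s : ℝ) {α : ℝ} (hα : 0 < α) :
    Integrable (C0 n s α) := by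
  apply ((weight_integrable n hn).const_mul (α ^ s)).mono'
    (C0_continuous n s α).aestronglyMeasurable
  filter_upwards with y
  have h2 : (0:ℝ) < 1 + ‖y‖ ^ 2 := by positivity
  have hinv : (0:ℝ) < ((1 + ‖y‖ ^ 2) ^ n)⁻¹ := by positivity
  have hαs := (Real.rpow_pos_of_pos hα s).le
  rw [Real.norm_eq_abs, abs_of_pos (C0_pos hα y), C0]
  rw [mul_comm (1 + ‖y‖), ← mul_assoc]
  have : α ^ s * ((1 + ‖y‖ ^ 2) ^ n)⁻¹ * 1 ≤ α ^ s * ((1 + ‖y‖ ^ 2) ^ n)⁻¹ * (1 + ‖y‖) := by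
    apply mul_le_mul_of_nonneg_left _ (by positivity)
    linarith [norm_nonneg y]
  linarith

lemma integral_comp_affine (f : EuclideanSpace ℝ (Fin n) → ℝ) (μ0 : ℝ)
    (ξ : EuclideanSpace ℝ (Fin n)) :
    ∫ y, f (μ0 • y + ξ) = |(μ0 ^ n)⁻¹| * ∫ x, f x := by
  have h1 : ∫ y, f (μ0 • y + ξ) = ∫ y, (fun x => f (x + ξ)) (μ0 • y) := rfl
  rw [h1, MeasureTheory.Measure.integral_comp_smul volume (fun x => f (x + ξ)) μ0,
    integral_add_right_eq_self f ξ, finrank_euclideanSpace_fin, smul_eq_mul]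

lemma integrable_comp_affine {f : EuclideanSpace ℝ (Fin n) → ℝ} (hf : Integrable f)
    {μ0 : ℝ} (hμ0 : μ0 ≠ 0) (ξ : EuclideanSpace ℝ (Fin n)) :
    Integrable (fun y => f (μ0 • y + ξ)) := by
  have h1 : Integrable (fun x => f (x + ξ)) := by
    have := (measurePreserving_add_right (volume : Measure (EuclideanSpace ℝ (Fin n)))
      ξ).integrable_comp hf.aestronglyMeasurable
    exact this.2 hf
  exact (integrable_comp_smul_iff volume (fun x => f (x + ξ)) hμ0).2 h1

lemma inner_gradient_eq (K : EuclideanSpace ℝ (Fin n) → ℝ) (x v : EuclideanSpace ℝ (Fin n)) :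
    ⟪gradient K x, v⟫ = fderiv ℝ K x v := by
  rw [gradient]
  exact InnerProductSpace.toDual_symm_apply (𝕜 := ℝ) (E := EuclideanSpace ℝ (Fin n))

lemma norm_gradient_eq (K : EuclideanSpace ℝ (Fin n) → ℝ) (x : EuclideanSpace ℝ (Fin n)) :
    ‖gradient K x‖ = ‖fderiv ℝ K x‖ := by
  rw [gradient]
  exact LinearIsometryEquiv.norm_map _ _

lemma h_continuous {K : EuclideanSpace ℝ (Fin n) → ℝ} (hK : ContDiff ℝ 2 K) :
    Continuous fun x : EuclideanSpace ℝ (Fin n) => ⟪gradient K x, x⟫ := by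
  have h1 : ∀ x, ⟪gradient K x, x⟫ = fderiv ℝ K x x := fun x => inner_gradient_eq K x x
  simp_rw [h1]
  exact (hK.continuous_fderiv (by norm_num)).clm_apply continuous_id

end prev

lemma key (n : ℕ) (hn : 2 ≤ n) (s α : ℝ) (hα : 0 < α)
    (K : EuclideanSpace ℝ (Fin n) → ℝ) (hK : ContDiff ℝ 2 K)
    (hKgb : ∃ C, ∀ x, ‖gradient K x‖ ≤ C)
    (η : ℝ) (hη : 0 < η)
    (ha : ∀ x : EuclideanSpace ℝ (Fin n), η ≤ ‖x‖ → ⟪gradient K x, x⟫ < 0)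
    (hb : Integrable (fun x : EuclideanSpace ℝ (Fin n) => ⟪gradient K x, x⟫))
    (hc : (∫ x : EuclideanSpace ℝ (Fin n), ⟪gradient K x, x⟫) < 0) :
    ∃ R > 0, ∀ (μ : ℝ) (ξ : EuclideanSpace ℝ (Fin n)), R ≤ |μ| + ‖ξ‖ →
      (∫ y, ⟪gradient K (μ • y + ξ), μ • y + ξ⟫ * C0 n s α y) < 0 := by
  classical
  set h : EuclideanSpace ℝ (Fin n) → ℝ := fun x => ⟪gradient K x, x⟫ with hh
  set I : ℝ := ∫ x, h x with hI
  obtain ⟨Cg, hCg⟩ := hKgb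
  have hCg0 : 0 ≤ Cg := le_trans (norm_nonneg _) (hCg 0)
  have habs : ∀ x : EuclideanSpace ℝ (Fin n), |h x| ≤ Cg * ‖x‖ := by
    intro x
    calc |h x| ≤ ‖gradient K x‖ * ‖x‖ := abs_real_inner_le_norm _ _
    _ ≤ Cg * ‖x‖ := by gcongr; exact hCg x
  have hcont : Continuous h := h_continuous hK
  have hpos : Integrable (fun x : EuclideanSpace ℝ (Fin n) => max (h x) 0) := hb.pos_part
  have hneg : Integrable (fun x : EuclideanSpace ℝ (Fin n) => max (-h x) 0) := hb.neg_part
  -- choose T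
  have tends : Filter.Tendsto (fun k : ℕ => ∫ x in closedBall (0:EuclideanSpace ℝ (Fin n)) k, h x)
      Filter.atTop (nhds I) := by
    have hun : (⋃ k : ℕ, closedBall (0:EuclideanSpace ℝ (Fin n)) k) = Set.univ := iUnion_closedBall_nat 0
    have := MeasureTheory.tendsto_setIntegral_of_monotone
      (s := fun k : ℕ => closedBall (0:EuclideanSpace ℝ (Fin n)) k) (f := h) (μ := volume)
      (fun k => measurableSet_closedBall)
      (fun i j hij => closedBall_subset_closedBall (by exact_mod_cast hij))
      (by rw [hun]; exact hb.integrableOn)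
    rwa [hun, setIntegral_univ] at this
  have hev1 : ∀ᶠ k : ℕ in Filter.atTop, (∫ x in closedBall (0:EuclideanSpace ℝ (Fin n)) k, h x) < (3/4) * I := by
    apply tends.eventually_lt_const
    linarith
  obtain ⟨T0, hT0⟩ := (hev1.and (Filter.eventually_ge_atTop (⌈η⌉₊ + 1))).exists
  set T : ℝ := (T0 : ℝ) with hT
  have hceil : ⌈η⌉₊ + 1 ≤ T0 := hT0.2
  have hTη : η ≤ T := by
    have h1 : (⌈η⌉₊ : ℝ) ≤ T0 := by exact_mod_cast Nat.le_of_succ_le hceil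
    calc η ≤ (⌈η⌉₊ : ℝ) := Nat.le_ceil η
    _ ≤ T := h1
  have hT1 : 1 ≤ T := by
    have h1 : (1:ℕ) ≤ T0 := by omega
    rw [hT]
    exact_mod_cast h1
  have hJT : (∫ x in closedBall (0:EuclideanSpace ℝ (Fin n)) T, h x) < (3/4) * I := hT0.1
  have hBmeas : MeasurableSet (closedBall (0:EuclideanSpace ℝ (Fin n)) T) := measurableSet_closedBall
  have hout : ∀ x : EuclideanSpace ℝ (Fin n), x ∉ closedBall (0:EuclideanSpace ℝ (Fin n)) T → h x < 0 := by
    intro x hx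
    apply ha
    rw [mem_closedBall, dist_zero_right, not_le] at hx
    linarith
  have hp_supp : ∀ x : EuclideanSpace ℝ (Fin n), x ∉ closedBall (0:EuclideanSpace ℝ (Fin n)) T → max (h x) 0 = 0 :=
    fun x hx => max_eq_right (hout x hx).le
  set Aplus : ℝ := ∫ x, max (h x) 0 with hAp
  have hA0 : 0 ≤ Aplus := integral_nonneg fun x => le_max_right _ _
  have hApB : (∫ x in closedBall (0:EuclideanSpace ℝ (Fin n)) T, max (h x) 0) = Aplus :=
    setIntegral_eq_integral_of_forall_compl_eq_zero hp_supp
  set Jm : ℝ := ∫ x in closedBall (0:EuclideanSpace ℝ (Fin n)) T, max (-h x) 0 with hJm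
  have hsplit : Aplus - Jm < (3/4) * I := by
    have hdiff : (∫ x in closedBall (0:EuclideanSpace ℝ (Fin n)) T, h x)
        = (∫ x in closedBall (0:EuclideanSpace ℝ (Fin n)) T, max (h x) 0) - ∫ x in closedBall (0:EuclideanSpace ℝ (Fin n)) T, max (-h x) 0 := by
      rw [← integral_sub hpos.integrableOn hneg.integrableOn]
      congr 1
      funext x
      rcases le_total 0 (h x) with hx | hx
      · rw [max_eq_left hx, max_eq_right (by linarith)]; ring
      · rw [max_eq_right hx, max_eq_left (by linarith)]; ring
    rw [hApB] at hdiff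
    rw [← hdiff]
    exact hJT
  set ε0 : ℝ := -I / (4 * (Aplus + 1)) with hε0def
  have hε0 : 0 < ε0 := div_pos (by linarith) (by linarith)
  -- core estimate
  have core : ∀ (μ : ℝ) (ξ : EuclideanSpace ℝ (Fin n)), μ ≠ 0 → ∀ a b : ℝ, 0 ≤ a →
      (∀ y : EuclideanSpace ℝ (Fin n), ‖μ • y + ξ‖ ≤ T → a ≤ ‖y‖ ∧ ‖y‖ ≤ b) →
      (1 + b ^ 2) ^ n ≤ (1 + ε0) * (1 + a ^ 2) ^ n →
      (∫ y, h (μ • y + ξ) * C0 n s α y) < 0 := by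
    intro μ ξ hμ a b ha0 hab hratio
    have hαs := Real.rpow_pos_of_pos hα s
    set ca : ℝ := α ^ s * ((1 + a ^ 2) ^ n)⁻¹ with hca
    set cb : ℝ := α ^ s * ((1 + b ^ 2) ^ n)⁻¹ with hcb
    have hPa : (0:ℝ) < (1 + a ^ 2) ^ n := by positivity
    have hPb : (0:ℝ) < (1 + b ^ 2) ^ n := by positivity
    have hcb0 : 0 < cb := by positivity
    have hca0 : 0 < ca := by positivity
    have hkey : (1:ℝ)/((1 + a ^ 2) ^ n) ≤ (1 + ε0)/((1 + b ^ 2) ^ n) := by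
      rw [div_le_div_iff₀ hPa hPb]
      nlinarith [hratio]
    have hcacb : ca ≤ (1 + ε0) * cb := by
      rw [hca, hcb, inv_eq_one_div, inv_eq_one_div]
      calc α ^ s * (1/(1 + a ^ 2) ^ n) ≤ α ^ s * ((1 + ε0)/(1 + b ^ 2) ^ n) :=
            mul_le_mul_of_nonneg_left hkey hαs.le
      _ = (1 + ε0) * (α ^ s * (1/(1 + b ^ 2) ^ n)) := by ring
    set Hp : EuclideanSpace ℝ (Fin n) → ℝ := Set.indicator (closedBall (0:EuclideanSpace ℝ (Fin n)) T) (fun x => max (h x) 0) with hHp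
    set Hm : EuclideanSpace ℝ (Fin n) → ℝ := Set.indicator (closedBall (0:EuclideanSpace ℝ (Fin n)) T) (fun x => max (-h x) 0) with hHm
    have ihp : Integrable Hp := hpos.indicator hBmeas
    have ihm : Integrable Hm := hneg.indicator hBmeas
    have ihpa : Integrable (fun y => Hp (μ • y + ξ)) := integrable_comp_affine ihp hμ ξ
    have ihma : Integrable (fun y => Hm (μ • y + ξ)) := integrable_comp_affine ihm hμ ξ
    have ig : Integrable (fun y : EuclideanSpace ℝ (Fin n) => h (μ • y + ξ) * C0 n s α y) := by
      apply (((weight_integrable n hn).const_mul ((Cg * (|μ| + ‖ξ‖)) * α ^ s)).mono'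
        (Continuous.aestronglyMeasurable
          ((hcont.comp (by fun_prop)).mul (C0_continuous n s α))))
      filter_upwards with y
      rw [Real.norm_eq_abs, Pi.mul_apply, Function.comp_apply, abs_mul, abs_of_pos (C0_pos hα y)]
      have h1 : |h (μ • y + ξ)| ≤ Cg * (|μ| * ‖y‖ + ‖ξ‖) := by
        calc |h (μ • y + ξ)| ≤ Cg * ‖μ • y + ξ‖ := habs _
        _ ≤ Cg * (|μ| * ‖y‖ + ‖ξ‖) := by
            apply mul_le_mul_of_nonneg_left _ hCg0
            calc ‖μ • y + ξ‖ ≤ ‖μ • y‖ + ‖ξ‖ := norm_add_le _ _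
            _ = |μ| * ‖y‖ + ‖ξ‖ := by rw [norm_smul, Real.norm_eq_abs]
      have hy0 := norm_nonneg y
      have hξ0 := norm_nonneg ξ
      have hinv : (0:ℝ) < ((1 + ‖y‖ ^ 2) ^ n)⁻¹ := by
        have : (0:ℝ) < 1 + ‖y‖ ^ 2 := by positivity
        positivity
      calc |h (μ • y + ξ)| * C0 n s α y
          ≤ (Cg * (|μ| * ‖y‖ + ‖ξ‖)) * C0 n s α y := by
            apply mul_le_mul_of_nonneg_right h1 (C0_pos hα y).le
      _ = (Cg * (|μ| * ‖y‖ + ‖ξ‖)) * α ^ s * ((1 + ‖y‖ ^ 2) ^ n)⁻¹ := by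
            rw [C0]; ring
      _ ≤ (Cg * (|μ| + ‖ξ‖)) * α ^ s * ((1 + ‖y‖) * ((1 + ‖y‖ ^ 2) ^ n)⁻¹) := by
            rw [← mul_assoc]
            rw [show (Cg * (|μ| + ‖ξ‖)) * α ^ s * (1 + ‖y‖) * ((1 + ‖y‖ ^ 2) ^ n)⁻¹
              = (Cg * ((|μ| + ‖ξ‖) * (1 + ‖y‖))) * α ^ s * ((1 + ‖y‖ ^ 2) ^ n)⁻¹ by ring]
            apply mul_le_mul_of_nonneg_right _ hinv.le
            apply mul_le_mul_of_nonneg_right _ hαs.le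
            apply mul_le_mul_of_nonneg_left _ hCg0
            nlinarith [abs_nonneg μ]
      _ = (Cg * (|μ| + ‖ξ‖)) * α ^ s * ((1 + ‖y‖) * ((1 + ‖y‖ ^ 2) ^ n)⁻¹) := by ring
    have hptwise : ∀ y : EuclideanSpace ℝ (Fin n), h (μ • y + ξ) * C0 n s α y
        ≤ ca * Hp (μ • y + ξ) - cb * Hm (μ • y + ξ) := by
      intro y
      by_cases hin : (μ • y + ξ) ∈ closedBall (0:EuclideanSpace ℝ (Fin n)) T
      · obtain ⟨hay, hby⟩ := hab y (by rwa [mem_closedBall, dist_zero_right] at hin)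
        have hC0a : C0 n s α y ≤ ca := C0_le_of_le hα hay ha0
        have hC0b : cb ≤ C0 n s α y := le_C0_of_le hα hby
        rw [hHp, hHm, Set.indicator_of_mem hin, Set.indicator_of_mem hin]
        rcases le_total 0 (h (μ • y + ξ)) with hx | hx
        · rw [max_eq_left hx, max_eq_right (by linarith)]
          have := C0_pos (n := n) (s := s) hα y
          nlinarith
        · rw [max_eq_right hx, max_eq_left (by linarith)]
          have := C0_pos (n := n) (s := s) hα y
          nlinarith
      · rw [hHp, hHm, Set.indicator_of_notMem hin, Set.indicator_of_notMem hin]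
        have h1 := hout _ hin
        have h2 := C0_pos (n := n) (s := s) hα y
        nlinarith
    have hrhs_int : Integrable (fun y : EuclideanSpace ℝ (Fin n) =>
        ca * Hp (μ • y + ξ) - cb * Hm (μ • y + ξ)) :=
      (ihpa.const_mul ca).sub (ihma.const_mul cb)
    have hmono := integral_mono ig hrhs_int hptwise
    set m : ℝ := |(μ ^ n)⁻¹| with hm
    have hm0 : 0 < m := abs_pos.2 (inv_ne_zero (pow_ne_zero _ hμ))
    have heval : (∫ y, (ca * Hp (μ • y + ξ) - cb * Hm (μ • y + ξ)))
        = m * (ca * Aplus - cb * Jm) := by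
      rw [integral_sub (ihpa.const_mul ca) (ihma.const_mul cb),
        integral_const_mul, integral_const_mul,
        integral_comp_affine Hp μ ξ, integral_comp_affine Hm μ ξ]
      rw [hHp, hHm, integral_indicator hBmeas, integral_indicator hBmeas, hApB]
      ring
    rw [heval] at hmono
    have hεA : ε0 * Aplus ≤ -I / 4 := by
      rw [hε0def, div_mul_eq_mul_div, div_le_div_iff₀ (by linarith) (by norm_num)]
      nlinarith
    have hbra : ca * Aplus - cb * Jm ≤ cb * (I / 2) := by
      have h1 : ca * Aplus ≤ (1 + ε0) * cb * Aplus := by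
        apply mul_le_mul_of_nonneg_right hcacb hA0
      have h2 : (1 + ε0) * cb * Aplus - cb * Jm = cb * (Aplus - Jm) + cb * (ε0 * Aplus) := by
        ring
      nlinarith
    calc (∫ y, h (μ • y + ξ) * C0 n s α y) ≤ m * (ca * Aplus - cb * Jm) := hmono
    _ ≤ m * (cb * (I / 2)) := by apply mul_le_mul_of_nonneg_left hbra hm0.le
    _ < 0 := by
        apply mul_neg_of_pos_of_neg hm0
        apply mul_neg_of_pos_of_neg hcb0
        linarith
  -- endgame
  have hn0 : (n:ℝ) ≠ 0 := by positivity
  have hε1 : (1:ℝ) < 1 + ε0 := by linarith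
  set d0 : ℝ := (1 + ε0) ^ ((n:ℝ)⁻¹) - 1 with hd0def
  have hd0 : 0 < d0 := by
    have : (1:ℝ) < (1 + ε0) ^ ((n:ℝ)⁻¹) :=
      Real.one_lt_rpow_iff_of_pos (by linarith) |>.2 (Or.inl ⟨hε1, by positivity⟩)
    rw [hd0def]
    linarith
  have fact0 : ∀ u : ℝ, 0 ≤ u → u ≤ d0 → (1 + u) ^ n ≤ 1 + ε0 := by
    intro u hu0 hud
    calc (1 + u) ^ n ≤ (1 + d0) ^ n := by
          apply pow_le_pow_left₀ (by linarith) (by linarith)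
    _ = ((1 + ε0) ^ ((n:ℝ)⁻¹)) ^ n := by rw [hd0def]; ring_nf
    _ = 1 + ε0 := by
        rw [← Real.rpow_natCast ((1 + ε0) ^ ((n:ℝ)⁻¹)) n, ← Real.rpow_mul (by linarith),
          inv_mul_cancel₀ hn0, Real.rpow_one]
  set d1 : ℝ := (1 + ε0) ^ ((2 * (n:ℝ))⁻¹) - 1 with hd1def
  have hd1 : 0 < d1 := by
    have : (1:ℝ) < (1 + ε0) ^ ((2 * (n:ℝ))⁻¹) :=
      Real.one_lt_rpow_iff_of_pos (by linarith) |>.2 (Or.inl ⟨hε1, by positivity⟩)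
    rw [hd1def]
    linarith
  have fact1 : (1 + d1) ^ (2 * n) = 1 + ε0 := by
    rw [hd1def, show (1 + ((1 + ε0) ^ ((2 * (n:ℝ))⁻¹) - 1)) = (1 + ε0) ^ ((2 * (n:ℝ))⁻¹) by ring]
    rw [← Real.rpow_natCast ((1 + ε0) ^ ((2 * (n:ℝ))⁻¹)) (2 * n), ← Real.rpow_mul (by linarith)]
    rw [show ((2 * n : ℕ) : ℝ) = 2 * (n:ℝ) by push_cast; ring]
    rw [inv_mul_cancel₀ (by positivity), Real.rpow_one]
  set Ξ : ℝ := max (T + 2 * T / d1) (max (2 * T) (η + 1)) with hΞdef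
  have hΞ1 : T + 2 * T / d1 ≤ Ξ := le_max_left _ _
  have hΞ2 : 2 * T ≤ Ξ := le_trans (le_max_left _ _) (le_max_right _ _)
  have hΞ3 : η + 1 ≤ Ξ := le_trans (le_max_right _ _) (le_max_right _ _)
  have hΞpos : 0 < Ξ := by linarith
  set M : ℝ := (T + Ξ) / Real.sqrt d0 + 1 with hMdef
  have hsq : 0 < Real.sqrt d0 := Real.sqrt_pos.2 hd0
  have hM1 : 1 ≤ M := by
    have : 0 ≤ (T + Ξ) / Real.sqrt d0 := by positivity
    rw [hMdef]
    linarith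
  refine ⟨Ξ + M, by linarith, ?_⟩
  intro μ ξ hR
  rcases le_or_gt Ξ ‖ξ‖ with hξ | hξ
  · -- ‖ξ‖ large
    rcases eq_or_ne μ 0 with rfl | hμ
    · -- μ = 0
      have heq : (∫ y, ⟪gradient K ((0:ℝ) • y + ξ), (0:ℝ) • y + ξ⟫ * C0 n s α y)
          = h ξ * ∫ y, C0 n s α y := by
        rw [← integral_const_mul]
        congr 1
        funext y
        rw [zero_smul, zero_add]
      rw [heq]
      apply mul_neg_of_neg_of_pos
      · exact ha ξ (by linarith)
      · rw [MeasureTheory.integral_pos_iff_support_of_nonneg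
          (fun y => (C0_pos hα y).le) (C0_integrable n hn s hα)]
        have : Function.support (C0 n s α) = Set.univ := by
          ext y; simp [Function.mem_support, (C0_pos hα y).ne']
        rw [this]
        exact isOpen_univ.measure_pos volume Set.univ_nonempty
    · have hμpos : 0 < |μ| := abs_pos.2 hμ
      apply core μ ξ hμ ((‖ξ‖ - T) / |μ|) ((‖ξ‖ + T) / |μ|)
      · apply div_nonneg _ hμpos.le
        linarith
      · intro y hy
        have hnorm : ‖μ • y‖ = |μ| * ‖y‖ := by rw [norm_smul, Real.norm_eq_abs]
        have hlow : ‖ξ‖ - T ≤ |μ| * ‖y‖ := by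
          have h9 : ‖ξ‖ ≤ ‖μ • y + ξ‖ + ‖μ • y‖ := by
            have := norm_add_le (μ • y + ξ) (-(μ • y))
            simpa using this
          rw [← hnorm]; linarith
        have hhigh : |μ| * ‖y‖ ≤ ‖ξ‖ + T := by
          rw [← hnorm]
          calc ‖μ • y‖ = ‖(μ • y + ξ) - ξ‖ := by rw [add_sub_cancel_right]
          _ ≤ ‖μ • y + ξ‖ + ‖ξ‖ := norm_sub_le _ _
          _ ≤ ‖ξ‖ + T := by linarith
        constructor
        · rw [div_le_iff₀ hμpos]; linarith [hlow]
        · rw [le_div_iff₀ hμpos]; linarith [hhigh]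
      · -- ratio bound
        set a : ℝ := (‖ξ‖ - T) / |μ| with hadef
        set b : ℝ := (‖ξ‖ + T) / |μ| with hbdef
        have haT : 0 < ‖ξ‖ - T := by linarith
        have ha0 : 0 < a := div_pos haT hμpos
        have hb0 : 0 < b := div_pos (by linarith) hμpos
        have hba : b ≤ (1 + d1) * a := by
          rw [hbdef, hadef, ← mul_div_assoc, div_le_div_iff₀ hμpos hμpos]
          have hd1T : d1 * (2 * T / d1) = 2 * T := by
            field_simp
          have h7 : 2 * T / d1 ≤ ‖ξ‖ - T := by linarith
          have h8 : 2 * T ≤ d1 * (‖ξ‖ - T) := by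
            calc 2 * T = d1 * (2 * T / d1) := hd1T.symm
            _ ≤ d1 * (‖ξ‖ - T) := mul_le_mul_of_nonneg_left h7 hd1.le
          have h9 : ‖ξ‖ + T ≤ (1 + d1) * (‖ξ‖ - T) := by nlinarith [h8]
          exact mul_le_mul_of_nonneg_right h9 hμpos.le
        have hsq : 1 + b ^ 2 ≤ (1 + d1) ^ 2 * (1 + a ^ 2) := by
          have h1 : b ^ 2 ≤ ((1 + d1) * a) ^ 2 := by
            apply pow_le_pow_left₀ hb0.le hba
          have h2 : (1:ℝ) ≤ (1 + d1) ^ 2 := by nlinarith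
          nlinarith [sq_nonneg a]
        calc (1 + b ^ 2) ^ n ≤ ((1 + d1) ^ 2 * (1 + a ^ 2)) ^ n := by
              apply pow_le_pow_left₀ (by positivity) hsq
        _ = (1 + d1) ^ (2 * n) * (1 + a ^ 2) ^ n := by
              rw [mul_pow, ← pow_mul]
        _ = (1 + ε0) * (1 + a ^ 2) ^ n := by rw [fact1]
  · -- |μ| large
    have hμM : M ≤ |μ| := by linarith
    have hμ : μ ≠ 0 := by
      intro h0
      rw [h0, abs_zero] at hμM
      linarith
    have hμpos : 0 < |μ| := abs_pos.2 hμ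
    apply core μ ξ hμ 0 ((T + Ξ) / |μ|) le_rfl
    · intro y hy
      refine ⟨norm_nonneg y, ?_⟩
      have hnorm : ‖μ • y‖ = |μ| * ‖y‖ := by rw [norm_smul, Real.norm_eq_abs]
      have : |μ| * ‖y‖ ≤ T + ‖ξ‖ := by
        rw [← hnorm]
        calc ‖μ • y‖ = ‖(μ • y + ξ) - ξ‖ := by rw [add_sub_cancel_right]
        _ ≤ ‖μ • y + ξ‖ + ‖ξ‖ := norm_sub_le _ _
        _ ≤ T + ‖ξ‖ := by linarith
      rw [le_div_iff₀ hμpos]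
      nlinarith
    · set b : ℝ := (T + Ξ) / |μ| with hbdef
      have hb0 : 0 ≤ b := by positivity
      have hbd : b ^ 2 ≤ d0 := by
        have h1 : b ≤ Real.sqrt d0 := by
          rw [hbdef, div_le_iff₀ hμpos]
          have : Real.sqrt d0 * M = (T + Ξ) + Real.sqrt d0 := by
            rw [hMdef]; field_simp
          nlinarith [mul_le_mul_of_nonneg_left hμM hsq.le]
        calc b ^ 2 ≤ Real.sqrt d0 ^ 2 := by apply pow_le_pow_left₀ hb0 h1
        _ = d0 := Real.sq_sqrt hd0.le
      calc (1 + b ^ 2) ^ n ≤ 1 + ε0 := fact0 _ (by positivity) hbd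
      _ = (1 + ε0) * (1 + (0:ℝ) ^ 2) ^ n := by norm_num

lemma gam_fderiv (n : ℕ) (hn : 2 ≤ n) (γ : ℝ) (hγ : 0 < γ) (hγn : γ < (n : ℝ) / 2)
    (p : ℝ) (hp : p = ((n : ℝ) + 2 * γ) / ((n : ℝ) - 2 * γ))
    (α : ℝ) (hα : 0 < α)
    (K : EuclideanSpace ℝ (Fin n) → ℝ) (hK : ContDiff ℝ 2 K)
    (hKb : ∃ C, ∀ x, |K x| ≤ C)
    (hKgb : ∃ C, ∀ x, ‖gradient K x‖ ≤ C)
    (μ : ℝ) (ξ : EuclideanSpace ℝ (Fin n)) :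
    fderiv ℝ (fun q : ℝ × EuclideanSpace ℝ (Fin n) => Gam n γ α p K q.1 q.2) (μ, ξ) (μ, ξ)
      = (1 / (p + 1)) * ∫ y, ⟪gradient K (μ • y + ξ), μ • y + ξ⟫ * C0 n (p + 1) α y := by
  obtain ⟨CK, hCK⟩ := hKb
  obtain ⟨Cg, hCg⟩ := hKgb
  have hCg0 : 0 ≤ Cg := le_trans (norm_nonneg _) (hCg 0)
  have hCK0 : 0 ≤ CK := le_trans (abs_nonneg _) (hCK 0)
  set s : ℝ := p + 1 with hs
  set L : EuclideanSpace ℝ (Fin n) → (ℝ × EuclideanSpace ℝ (Fin n)) →L[ℝ] EuclideanSpace ℝ (Fin n) :=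
    fun y => (ContinuousLinearMap.fst ℝ ℝ (EuclideanSpace ℝ (Fin n))).smulRight y
      + ContinuousLinearMap.snd ℝ ℝ (EuclideanSpace ℝ (Fin n)) with hL
  have hLapp : ∀ y q, L y q = q.1 • y + q.2 := fun y q => rfl
  have hLnorm : ∀ y, ‖L y‖ ≤ ‖y‖ + 1 := by
    intro y
    apply ContinuousLinearMap.opNorm_le_bound _ (by positivity)
    intro q
    rw [hLapp]
    calc ‖q.1 • y + q.2‖ ≤ ‖q.1 • y‖ + ‖q.2‖ := norm_add_le _ _
    _ = |q.1| * ‖y‖ + ‖q.2‖ := by rw [norm_smul, Real.norm_eq_abs]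
    _ ≤ ‖q‖ * ‖y‖ + ‖q‖ := by
        have h1 : |q.1| ≤ ‖q‖ := by
          rw [← Real.norm_eq_abs]
          exact norm_fst_le q
        have h2 : ‖q.2‖ ≤ ‖q‖ := norm_snd_le q
        have := norm_nonneg y
        have := norm_nonneg q
        nlinarith
    _ = (‖y‖ + 1) * ‖q‖ := by ring
  have hLcont : Continuous fun y => L y := by
    apply Continuous.add _ continuous_const
    exact (ContinuousLinearMap.smulRightL ℝ (ℝ × EuclideanSpace ℝ (Fin n))
      (EuclideanSpace ℝ (Fin n)) (ContinuousLinearMap.fst ℝ ℝ (EuclideanSpace ℝ (Fin n)))).continuous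
  set F' : EuclideanSpace ℝ (Fin n) → (ℝ × EuclideanSpace ℝ (Fin n)) →L[ℝ] ℝ :=
    fun y => C0 n s α y • ((fderiv ℝ K (μ • y + ξ)).comp (L y)) with hF'
  have hfdnorm : ∀ x, ‖fderiv ℝ K x‖ ≤ Cg := fun x => by
    rw [← norm_gradient_eq]; exact hCg x
  have hbnd : ∀ (a : ℝ) (c y : EuclideanSpace ℝ (Fin n)),
      ‖C0 n s α y • ((fderiv ℝ K (a • y + c)).comp (L y))‖
        ≤ Cg * ((1 + ‖y‖) * C0 n s α y) := by
    intro a c y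
    have hns : ‖C0 n s α y • ((fderiv ℝ K (a • y + c)).comp (L y))‖
        = C0 n s α y * ‖(fderiv ℝ K (a • y + c)).comp (L y)‖ := by
      rw [norm_smul (C0 n s α y) ((fderiv ℝ K (a • y + c)).comp (L y)),
        Real.norm_eq_abs, abs_of_pos (C0_pos hα y)]
    rw [hns]
    calc C0 n s α y * ‖(fderiv ℝ K (a • y + c)).comp (L y)‖
        ≤ C0 n s α y * (‖fderiv ℝ K (a • y + c)‖ * ‖L y‖) :=
          mul_le_mul_of_nonneg_left (ContinuousLinearMap.opNorm_comp_le _ _) (C0_pos hα y).le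
    _ ≤ C0 n s α y * (Cg * (‖y‖ + 1)) := by
        apply mul_le_mul_of_nonneg_left _ (C0_pos hα y).le
        apply mul_le_mul (hfdnorm _) (hLnorm y) (norm_nonneg _) hCg0
    _ = Cg * ((1 + ‖y‖) * C0 n s α y) := by ring
  have hF'bound : ∀ y, ‖F' y‖ ≤ Cg * ((1 + ‖y‖) * C0 n s α y) := by
    intro y
    simp only [hF']
    exact hbnd μ ξ y
  have hbound_int : Integrable (fun y : EuclideanSpace ℝ (Fin n) =>
      Cg * ((1 + ‖y‖) * C0 n s α y)) := by
    have heq : (fun y : EuclideanSpace ℝ (Fin n) => Cg * ((1 + ‖y‖) * C0 n s α y))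
        = fun y => (Cg * α ^ s) * ((1 + ‖y‖) * ((1 + ‖y‖ ^ 2) ^ n)⁻¹) := by
      funext y; rw [C0]; ring
    rw [heq]
    exact (weight_integrable n hn).const_mul _
  have hF'cont : Continuous F' := by
    apply Continuous.smul (C0_continuous n s α)
    apply Continuous.clm_comp _ hLcont
    exact (hK.continuous_fderiv (by norm_num)).comp (by fun_prop)
  have hF'int : Integrable F' := by
    apply hbound_int.mono' hF'cont.aestronglyMeasurable
    filter_upwards with y
    exact hF'bound y
  have hdiff : HasFDerivAt
      (fun q : ℝ × EuclideanSpace ℝ (Fin n) => ∫ y, K (q.1 • y + q.2) * C0 n s α y)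
      (∫ y, F' y) (μ, ξ) := by
    have main := hasFDerivAt_integral_of_dominated_of_fderiv_le
      (F := fun (q : ℝ × EuclideanSpace ℝ (Fin n)) (y : EuclideanSpace ℝ (Fin n)) =>
        K (q.1 • y + q.2) * C0 n s α y)
      (F' := fun (q : ℝ × EuclideanSpace ℝ (Fin n)) (y : EuclideanSpace ℝ (Fin n)) =>
        C0 n s α y • ((fderiv ℝ K (q.1 • y + q.2)).comp (L y)))
      (x₀ := (μ, ξ)) (bound := fun y => Cg * ((1 + ‖y‖) * C0 n s α y))
      (μ := volume) (s := Set.univ) Filter.univ_mem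
      ?_ ?_ ?_ ?_ hbound_int ?_
    · exact main
    · apply Filter.Eventually.of_forall
      intro q'
      exact ((hK.continuous.comp (by fun_prop)).mul (C0_continuous n s α)).aestronglyMeasurable
    · apply (((C0_integrable n hn s hα).const_mul CK).mono'
        ((hK.continuous.comp (by fun_prop)).mul (C0_continuous n s α)).aestronglyMeasurable)
      filter_upwards with y
      rw [Real.norm_eq_abs, Pi.mul_apply, Function.comp_apply, abs_mul, abs_of_pos (C0_pos hα y)]
      exact mul_le_mul_of_nonneg_right (hCK _) (C0_pos hα y).le
    · exact hF'cont.aestronglyMeasurable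
    · apply Filter.Eventually.of_forall
      intro y q' hq'
      exact hbnd q'.1 q'.2 y
    · apply Filter.Eventually.of_forall
      intro y q' hq'
      have h1 : HasFDerivAt (fun q : ℝ × EuclideanSpace ℝ (Fin n) => q.1 • y + q.2)
          (L y) q' := (L y).hasFDerivAt
      have h2 : HasFDerivAt K (fderiv ℝ K (q'.1 • y + q'.2)) (q'.1 • y + q'.2) :=
        (hK.differentiable (by norm_num) _).hasFDerivAt
      have h3 := (h2.comp q' h1).mul_const (C0 n s α y)
      exact h3
  have hGamEq : (fun q : ℝ × EuclideanSpace ℝ (Fin n) => Gam n γ α p K q.1 q.2)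
      = fun q => (1 / (p + 1)) * ∫ y, K (q.1 • y + q.2) * C0 n s α y := by
    funext q
    rw [Gam]
    congr 1
    congr 1
    funext y
    rw [z0_rpow n hn γ hγ hγn p hp α hα y]
  have hG : HasFDerivAt (fun q : ℝ × EuclideanSpace ℝ (Fin n) => Gam n γ α p K q.1 q.2)
      ((1 / (p + 1)) • ∫ y, F' y) (μ, ξ) := by
    rw [hGamEq]
    exact hdiff.const_mul (1 / (p + 1))
  rw [hG.fderiv]
  rw [ContinuousLinearMap.smul_apply, smul_eq_mul]
  congr 1
  rw [ContinuousLinearMap.integral_apply hF'int]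
  congr 1
  funext y
  rw [hF', ContinuousLinearMap.smul_apply, ContinuousLinearMap.comp_apply, hLapp,
    smul_eq_mul, ← inner_gradient_eq]
  ring

/-- `⟨∇Γ(μ,ξ), (μ,ξ)⟩` is expressed as the Fréchet derivative of the uncurried `Γ`
applied to the vector `(μ, ξ)`. -/
theorem stmt6 (n : ℕ) (hn : 2 ≤ n) (γ : ℝ) (hγ : 0 < γ) (hγn : γ < (n : ℝ) / 2)
    (p : ℝ) (hp : p = ((n : ℝ) + 2 * γ) / ((n : ℝ) - 2 * γ))
    (α : ℝ) (hα : 0 < α)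
    (K : EuclideanSpace ℝ (Fin n) → ℝ) (hK : ContDiff ℝ 2 K)
    (hKb : ∃ C, ∀ x, |K x| ≤ C)
    (hKgb : ∃ C, ∀ x, ‖gradient K x‖ ≤ C)
    (η : ℝ) (hη : 0 < η)
    (ha : ∀ x : EuclideanSpace ℝ (Fin n), η ≤ ‖x‖ → ⟪gradient K x, x⟫ < 0)
    (hb : Integrable (fun x : EuclideanSpace ℝ (Fin n) => ⟪gradient K x, x⟫))
    (hc : (∫ x : EuclideanSpace ℝ (Fin n), ⟪gradient K x, x⟫) < 0) :
    ∃ R > 0, ∀ (μ : ℝ) (ξ : EuclideanSpace ℝ (Fin n)), R ≤ |μ| + ‖ξ‖ →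
      fderiv ℝ (fun q : ℝ × EuclideanSpace ℝ (Fin n) => Gam n γ α p K q.1 q.2) (μ, ξ) (μ, ξ)
        < 0 := by
  obtain ⟨R, hR0, hRkey⟩ := key n hn (p + 1) α hα K hK hKgb η hη ha hb hc
  refine ⟨R, hR0, ?_⟩
  intro μ ξ hRle
  rw [gam_fderiv n hn γ hγ hγn p hp α hα K hK hKb hKgb μ ξ]
  have hn2 : (2:ℝ) ≤ (n:ℝ) := by exact_mod_cast hn
  have hp1 : 0 < p + 1 := by
    rw [hp]
    have hd : 0 < (n:ℝ) - 2 * γ := by linarith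
    have hnum : 0 < (n:ℝ) + 2 * γ := by linarith
    have := div_pos hnum hd
    linarith
  exact mul_neg_of_pos_of_neg (by positivity) (hRkey μ ξ hRle)
end

section
/- If n ≥ 3 and K : ℝⁿ → ℝ is a bounded C² function with bounded first and second derivatives, then for every ξ ∈ ℝⁿ and every i = 1, …, n, the mixed second partial derivative of Γ satisfies ∂²_{μ ξᵢ}Γ(0, ξ) = 0. -/
open MeasureTheory

/-- `Γ` is even in `μ`, by the change of variables `y ↦ -y`. -/
lemma Gam_even (n : ℕ) (γ α p : ℝ) (K : EuclideanSpace ℝ (Fin n) → ℝ)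
    (μ : ℝ) (ξ : EuclideanSpace ℝ (Fin n)) :
    Gam n γ α p K (-μ) ξ = Gam n γ α p K μ ξ := by
  unfold Gam
  congr 1
  rw [← integral_neg_eq_self (fun y => K (μ • y + ξ) * z0 n γ α y ^ (p + 1)) volume]
  congr 1
  funext y
  have hz : z0 n γ α (-y) = z0 n γ α y := by simp [z0]
  simp only [smul_neg, neg_smul, hz]

/-- The mixed second partial derivative `∂²_{μ ξᵢ} Γ(0, ξ)` is expressed as the second
Fréchet derivative of the uncurried `Γ` at `(0, ξ)` applied to the directions
`(1, 0)` and `(0, eᵢ)`. -/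
theorem stmt7 (n : ℕ) (hn : 3 ≤ n) (γ : ℝ) (hγ : 0 < γ) (hγn : γ < (n : ℝ) / 2)
    (p : ℝ) (hp : p = ((n : ℝ) + 2 * γ) / ((n : ℝ) - 2 * γ))
    (α : ℝ) (hα : 0 < α)
    (K : EuclideanSpace ℝ (Fin n) → ℝ) (hK : ContDiff ℝ 2 K)
    (hKb : ∃ C, ∀ x, |K x| ≤ C)
    (hK1b : ∃ C, ∀ x, ‖fderiv ℝ K x‖ ≤ C)
    (hK2b : ∃ C, ∀ x, ‖fderiv ℝ (fderiv ℝ K) x‖ ≤ C)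
    (ξ : EuclideanSpace ℝ (Fin n)) (i : Fin n) :
    fderiv ℝ (fderiv ℝ (fun q : ℝ × EuclideanSpace ℝ (Fin n) => Gam n γ α p K q.1 q.2))
      ((0 : ℝ), ξ) ((1 : ℝ), (0 : EuclideanSpace ℝ (Fin n)))
      ((0 : ℝ), EuclideanSpace.single i (1 : ℝ)) = 0 := by
  set Γ : ℝ × EuclideanSpace ℝ (Fin n) → ℝ := fun q => Gam n γ α p K q.1 q.2 with hΓ
  set σ : (ℝ × EuclideanSpace ℝ (Fin n)) ≃L[ℝ] (ℝ × EuclideanSpace ℝ (Fin n)) :=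
    (ContinuousLinearEquiv.neg ℝ).prodCongr (ContinuousLinearEquiv.refl ℝ (EuclideanSpace ℝ (Fin n)))
    with hσ
  have hσ_apply : ∀ q : ℝ × EuclideanSpace ℝ (Fin n), σ q = (-q.1, q.2) := fun q => rfl
  -- Γ is even in μ
  have hΓσ : Γ ∘ σ = Γ := by
    funext q
    exact Gam_even n γ α p K q.1 q.2
  set T : ((ℝ × EuclideanSpace ℝ (Fin n)) →L[ℝ] ℝ) ≃L[ℝ]
      ((ℝ × EuclideanSpace ℝ (Fin n)) →L[ℝ] ℝ) :=
    σ.symm.arrowCongr (ContinuousLinearEquiv.refl ℝ ℝ) with hT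
  have hT_apply : ∀ (L : (ℝ × EuclideanSpace ℝ (Fin n)) →L[ℝ] ℝ)
      (v : ℝ × EuclideanSpace ℝ (Fin n)), T L v = L (σ v) := by
    intro L v
    simp [hT]
  have hT_comp : ∀ L : (ℝ × EuclideanSpace ℝ (Fin n)) →L[ℝ] ℝ,
      T L = L.comp (σ : (ℝ × EuclideanSpace ℝ (Fin n)) →L[ℝ] (ℝ × EuclideanSpace ℝ (Fin n))) := by
    intro L
    refine ContinuousLinearMap.ext fun v => ?_
    rw [hT_apply]
    rfl
  -- the first derivative satisfies the corresponding symmetry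
  have hF : fderiv ℝ Γ = fun q => T (fderiv ℝ Γ (σ q)) := by
    funext q
    have h : fderiv ℝ Γ q = fderiv ℝ (Γ ∘ σ) q := by rw [hΓσ]
    rw [h, σ.comp_right_fderiv, hT_comp]
  have hσ0ξ : σ ((0 : ℝ), ξ) = ((0 : ℝ), ξ) := by
    rw [hσ_apply]; simp
  set A := fderiv ℝ (fderiv ℝ Γ) ((0 : ℝ), ξ) with hA
  -- differentiate the symmetry relation
  have h1 : A = fderiv ℝ (fun q => T (fderiv ℝ Γ (σ q))) ((0 : ℝ), ξ) := by
    rw [hA]; conv_lhs => rw [hF]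
  have h2 : fderiv ℝ (fun q => T (fderiv ℝ Γ (σ q))) ((0 : ℝ), ξ)
      = (T : ((ℝ × EuclideanSpace ℝ (Fin n)) →L[ℝ] ℝ) →L[ℝ]
          ((ℝ × EuclideanSpace ℝ (Fin n)) →L[ℝ] ℝ)).comp
        (fderiv ℝ (fun q => fderiv ℝ Γ (σ q)) ((0 : ℝ), ξ)) :=
    T.comp_fderiv (f := fun q => fderiv ℝ Γ (σ q)) (x := ((0 : ℝ), ξ))
  have h3 : fderiv ℝ (fun q => fderiv ℝ Γ (σ q)) ((0 : ℝ), ξ)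
      = (fderiv ℝ (fderiv ℝ Γ) (σ ((0 : ℝ), ξ))).comp
        (σ : (ℝ × EuclideanSpace ℝ (Fin n)) →L[ℝ] (ℝ × EuclideanSpace ℝ (Fin n))) :=
    σ.comp_right_fderiv (f := fderiv ℝ Γ) (x := ((0 : ℝ), ξ))
  have key : A = (T : ((ℝ × EuclideanSpace ℝ (Fin n)) →L[ℝ] ℝ) →L[ℝ]
          ((ℝ × EuclideanSpace ℝ (Fin n)) →L[ℝ] ℝ)).comp
        (A.comp (σ : (ℝ × EuclideanSpace ℝ (Fin n)) →L[ℝ] (ℝ × EuclideanSpace ℝ (Fin n)))) := by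
    conv_lhs => rw [h1, h2, h3, hσ0ξ]
  have h10 : σ ((1 : ℝ), (0 : EuclideanSpace ℝ (Fin n)))
      = -((1 : ℝ), (0 : EuclideanSpace ℝ (Fin n))) := by
    rw [hσ_apply]; simp [Prod.ext_iff]
  have h0e : σ ((0 : ℝ), EuclideanSpace.single i (1 : ℝ)) =
      ((0 : ℝ), EuclideanSpace.single i (1 : ℝ)) := by
    rw [hσ_apply]; simp
  have hfin : A ((1 : ℝ), (0 : EuclideanSpace ℝ (Fin n)))
        ((0 : ℝ), EuclideanSpace.single i (1 : ℝ))
      = - (A ((1 : ℝ), (0 : EuclideanSpace ℝ (Fin n)))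
        ((0 : ℝ), EuclideanSpace.single i (1 : ℝ))) := by
    conv_lhs => rw [key]
    rw [ContinuousLinearMap.comp_apply, ContinuousLinearEquiv.coe_coe, hT_apply,
      ContinuousLinearMap.comp_apply, ContinuousLinearEquiv.coe_coe, h10, h0e, map_neg,
      ContinuousLinearMap.neg_apply]
  linarith [hfin]
end

section
/- If n ≥ 3 and K : ℝⁿ → ℝ is a bounded C² function with bounded first and second derivatives, then for every ξ ∈ ℝⁿ the pure second partial derivative of Γ in μ satisfies ∂²_{μμ}Γ(0, ξ) = c₁ ΔK(ξ), where c₁ = (1/(n(p+1))) ∫_{ℝⁿ} |y|² z₀(y)^{p+1} dy and ΔK denotes the Laplacian of K. -/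
open MeasureTheory

section Aux

variable {n : ℕ}

lemma aux_cont (n : ℕ) (r : ℝ) :
    Continuous fun y : EuclideanSpace ℝ (Fin n) => (1 + ‖y‖ ^ 2) ^ r :=
  (continuous_const.add (continuous_norm.pow 2)).rpow_const fun y => Or.inl (by simp only [Pi.add_apply, Pi.pow_apply]; positivity)

lemma aux_integrable (hn : 3 ≤ n) (k : ℕ) (hk : k ≤ 2) :
    Integrable (fun y : EuclideanSpace ℝ (Fin n) => ‖y‖ ^ k * (1 + ‖y‖ ^ 2) ^ (-(n:ℝ))) := by
  have hfin : (Module.finrank ℝ (EuclideanSpace ℝ (Fin n)) : ℝ) = n := by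
    simp [finrank_euclideanSpace]
  have h2 : Integrable (fun y : EuclideanSpace ℝ (Fin n) =>
      (1 + ‖y‖ ^ 2) ^ (-(2 * (n:ℝ) - k) / 2)) := by
    apply integrable_rpow_neg_one_add_norm_sq
    rw [hfin]
    have h1 : (k : ℝ) ≤ 2 := by exact_mod_cast hk
    have h2 : (3 : ℝ) ≤ n := by exact_mod_cast hn
    linarith
  refine h2.mono' ((continuous_norm.pow k).mul (aux_cont n _)).aestronglyMeasurable
    (Filter.Eventually.of_forall fun y => ?_)
  have hb : (0:ℝ) < 1 + ‖y‖ ^ 2 := by positivity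
  have h1 : ‖y‖ ^ k ≤ (1 + ‖y‖ ^ 2) ^ ((k:ℝ) / 2) := by
    have h0 : ‖y‖ ≤ (1 + ‖y‖ ^ 2) ^ ((1:ℝ) / 2) := by
      rw [← Real.sqrt_eq_rpow]
      have he : ‖y‖ = Real.sqrt (‖y‖ ^ 2) := by rw [Real.sqrt_sq (norm_nonneg y)]
      rw [he]
      exact Real.sqrt_le_sqrt (by nlinarith [norm_nonneg y, Real.sq_sqrt (sq_nonneg ‖y‖)])
    calc ‖y‖ ^ k ≤ ((1 + ‖y‖ ^ 2) ^ ((1:ℝ) / 2)) ^ k :=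
          pow_le_pow_left₀ (norm_nonneg y) h0 k
      _ = (1 + ‖y‖ ^ 2) ^ ((k:ℝ) / 2) := by
          rw [← Real.rpow_natCast ((1 + ‖y‖ ^ 2) ^ ((1:ℝ)/2)) k, ← Real.rpow_mul hb.le]
          ring_nf
  have h3 : ‖‖y‖ ^ k * (1 + ‖y‖ ^ 2) ^ (-(n:ℝ))‖ = ‖y‖ ^ k * (1 + ‖y‖ ^ 2) ^ (-(n:ℝ)) := by
    rw [Real.norm_eq_abs, abs_of_nonneg (by positivity)]
  rw [h3]
  calc ‖y‖ ^ k * (1 + ‖y‖ ^ 2) ^ (-(n:ℝ))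
      ≤ (1 + ‖y‖ ^ 2) ^ ((k:ℝ)/2) * (1 + ‖y‖ ^ 2) ^ (-(n:ℝ)) :=
        mul_le_mul_of_nonneg_right h1 (Real.rpow_nonneg hb.le _)
    _ = (1 + ‖y‖ ^ 2) ^ (-(2 * (n:ℝ) - k) / 2) := by
        rw [← Real.rpow_add hb]; ring_nf

lemma aux_comp_isometry (f : EuclideanSpace ℝ (Fin n) → ℝ)
    (e : EuclideanSpace ℝ (Fin n) ≃ₗᵢ[ℝ] EuclideanSpace ℝ (Fin n)) :
    ∫ y, f (e y) = ∫ y, f y :=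
  e.measurePreserving.integral_comp e.toHomeomorph.measurableEmbedding f

lemma aux_offdiag (w : ℝ → ℝ) (i j : Fin n) (hij : i ≠ j) :
    ∫ y : EuclideanSpace ℝ (Fin n), y i * y j * w ‖y‖ = 0 := by
  set e : EuclideanSpace ℝ (Fin n) ≃ₗᵢ[ℝ] EuclideanSpace ℝ (Fin n) :=
    LinearIsometryEquiv.piLpCongrRight 2
      (fun k => if k = i then LinearIsometryEquiv.neg ℝ else LinearIsometryEquiv.refl ℝ ℝ) with he
  have h1 : ∫ y : EuclideanSpace ℝ (Fin n), (e y) i * (e y) j * w ‖e y‖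
      = ∫ y : EuclideanSpace ℝ (Fin n), y i * y j * w ‖y‖ :=
    aux_comp_isometry (fun y => y i * y j * w ‖y‖) e
  have h2 : ∀ y : EuclideanSpace ℝ (Fin n), (e y) i * (e y) j * w ‖e y‖
      = -(y i * y j * w ‖y‖) := by
    intro y
    have hei : (e y) i = -(y i) := by simp [he, LinearIsometryEquiv.piLpCongrRight_apply]
    have hej : (e y) j = y j := by
      simp [he, LinearIsometryEquiv.piLpCongrRight_apply, (Ne.symm hij : j ≠ i)]
    rw [hei, hej, e.norm_map]; ring
  simp only [h2] at h1
  rw [integral_neg] at h1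
  linarith

lemma aux_swap (w : ℝ → ℝ) (i j : Fin n) :
    ∫ y : EuclideanSpace ℝ (Fin n), y i * y i * w ‖y‖
      = ∫ y : EuclideanSpace ℝ (Fin n), y j * y j * w ‖y‖ := by
  set e : EuclideanSpace ℝ (Fin n) ≃ₗᵢ[ℝ] EuclideanSpace ℝ (Fin n) :=
    LinearIsometryEquiv.piLpCongrLeft 2 ℝ ℝ (Equiv.swap i j) with he
  have h1 : ∫ y : EuclideanSpace ℝ (Fin n), (e y) i * (e y) i * w ‖e y‖
      = ∫ y : EuclideanSpace ℝ (Fin n), y i * y i * w ‖y‖ :=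
    aux_comp_isometry (fun y => y i * y i * w ‖y‖) e
  have h2 : ∀ y : EuclideanSpace ℝ (Fin n), (e y) i * (e y) i * w ‖e y‖
      = y j * y j * w ‖y‖ := by
    intro y
    have hei : (e y) i = y j := by
      simp only [he, LinearIsometryEquiv.piLpCongrLeft_apply, Equiv.piCongrLeft'_apply,
        Equiv.symm_swap]
      rw [Equiv.swap_apply_left]
    rw [hei, e.norm_map]
  simp only [h2] at h1
  exact h1.symm

lemma norm_sq_eq (y : EuclideanSpace ℝ (Fin n)) : ‖y‖ ^ 2 = ∑ j, (y j) ^ 2 := by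
  rw [EuclideanSpace.norm_eq, Real.sq_sqrt (by positivity)]
  simp [sq_abs]

lemma coord_sq_le (y : EuclideanSpace ℝ (Fin n)) (i : Fin n) : (y i) ^ 2 ≤ ‖y‖ ^ 2 := by
  rw [norm_sq_eq]
  exact Finset.single_le_sum (f := fun j => (y j)^2) (fun j _ => sq_nonneg _) (Finset.mem_univ i)

lemma aux_coord_int (w : ℝ → ℝ) (hw0 : ∀ t, 0 ≤ w t)
    (hwc : Continuous fun y : EuclideanSpace ℝ (Fin n) => w ‖y‖)
    (hwint : Integrable fun y : EuclideanSpace ℝ (Fin n) => ‖y‖ ^ 2 * w ‖y‖) (i j : Fin n) :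
    Integrable fun y : EuclideanSpace ℝ (Fin n) => y i * y j * w ‖y‖ := by
  refine hwint.mono' (((((EuclideanSpace.proj i).continuous).mul
    ((EuclideanSpace.proj j).continuous)).mul hwc).aestronglyMeasurable)
    (Filter.Eventually.of_forall fun y => ?_)
  have h1 : |y i * y j| ≤ ‖y‖ ^ 2 := by
    rw [abs_mul]
    have := coord_sq_le y i
    have := coord_sq_le y j
    nlinarith [abs_nonneg (y i), abs_nonneg (y j), sq_abs (y i), sq_abs (y j), norm_nonneg y]
  rw [Real.norm_eq_abs, abs_mul, abs_of_nonneg (hw0 _)]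
  exact mul_le_mul_of_nonneg_right h1 (hw0 _)

lemma aux_diag (hn : 0 < n) (w : ℝ → ℝ) (hw0 : ∀ t, 0 ≤ w t)
    (hwc : Continuous fun y : EuclideanSpace ℝ (Fin n) => w ‖y‖)
    (hwint : Integrable fun y : EuclideanSpace ℝ (Fin n) => ‖y‖ ^ 2 * w ‖y‖) (i : Fin n) :
    ∫ y : EuclideanSpace ℝ (Fin n), y i * y i * w ‖y‖
      = (1 / n) * ∫ y : EuclideanSpace ℝ (Fin n), ‖y‖ ^ 2 * w ‖y‖ := by
  have hsum : ∑ j : Fin n, ∫ y : EuclideanSpace ℝ (Fin n), y j * y j * w ‖y‖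
      = ∫ y : EuclideanSpace ℝ (Fin n), ‖y‖ ^ 2 * w ‖y‖ := by
    rw [← integral_finset_sum _ (fun j _ => aux_coord_int w hw0 hwc hwint j j)]
    congr 1; funext y
    rw [norm_sq_eq, Finset.sum_mul]
    congr 1; funext j; ring
  have hall : ∀ j : Fin n, ∫ y : EuclideanSpace ℝ (Fin n), y j * y j * w ‖y‖
      = ∫ y : EuclideanSpace ℝ (Fin n), y i * y i * w ‖y‖ := fun j => aux_swap w j i
  rw [Finset.sum_congr rfl (fun j _ => hall j), Finset.sum_const, Finset.card_univ,
    Fintype.card_fin, nsmul_eq_mul] at hsum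
  have hn' : (n : ℝ) ≠ 0 := by positivity
  field_simp
  simp only [sq] at hsum ⊢
  linarith [hsum]

lemma basis_expand (y : EuclideanSpace ℝ (Fin n)) :
    y = ∑ i, y i • EuclideanSpace.single i (1:ℝ) := by
  have h := (EuclideanSpace.basisFun (Fin n) ℝ).sum_repr y
  simp only [EuclideanSpace.basisFun_apply, EuclideanSpace.basisFun_repr] at h
  exact h.symm

lemma w_eq (γ α p : ℝ) (hγn : γ < (n : ℝ) / 2)
    (hp : p = ((n : ℝ) + 2 * γ) / ((n : ℝ) - 2 * γ)) (hα : 0 < α)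
    (y : EuclideanSpace ℝ (Fin n)) :
    z0 n γ α y ^ (p + 1) = α ^ (p + 1) * (1 + ‖y‖ ^ 2) ^ (-(n : ℝ)) := by
  have hb : (0:ℝ) < 1 + ‖y‖ ^ 2 := by positivity
  have hd : (0:ℝ) < (n : ℝ) - 2 * γ := by linarith
  have hexp : -(((n:ℝ) - 2 * γ) / 2) * (p + 1) = -(n:ℝ) := by
    rw [hp]; field_simp; ring
  unfold z0
  rw [Real.mul_rpow hα.le (Real.rpow_nonneg hb.le _), ← Real.rpow_mul hb.le, hexp]

lemma deriv_step1 (K : EuclideanSpace ℝ (Fin n) → ℝ) (hK : ContDiff ℝ 2 K)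
    (C₀ C₁ : ℝ) (hKb : ∀ x, |K x| ≤ C₀) (hK1b : ∀ x, ‖fderiv ℝ K x‖ ≤ C₁)
    (W : EuclideanSpace ℝ (Fin n) → ℝ) (hWc : Continuous W) (hW0 : ∀ y, 0 ≤ W y)
    (hWint : Integrable W) (hWint1 : Integrable fun y => ‖y‖ * W y)
    (ξ : EuclideanSpace ℝ (Fin n)) (t : ℝ) :
    HasDerivAt (fun s => ∫ y, K (s • y + ξ) * W y)
      (∫ y, fderiv ℝ K (t • y + ξ) y * W y) t := by
  have hKc : Continuous K := hK.continuous
  have hK' : ContDiff ℝ 1 (fderiv ℝ K) := hK.fderiv_right (m := 1) (by norm_num)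
  have haff : ∀ s : ℝ, Continuous fun y : EuclideanSpace ℝ (Fin n) => s • y + ξ :=
    fun s => by fun_prop
  have hmain := hasDerivAt_integral_of_dominated_loc_of_deriv_le
    (F := fun s y => K (s • y + ξ) * W y)
    (F' := fun s y => fderiv ℝ K (s • y + ξ) y * W y)
    (bound := fun y => C₁ * (‖y‖ * W y)) (x₀ := t) (s := Metric.ball t 1) (Metric.ball_mem_nhds t one_pos)
    (Filter.Eventually.of_forall fun s =>
      ((hKc.comp (haff s)).mul hWc).aestronglyMeasurable)
    ?hint ?hmeas ?hbound (hWint1.const_mul C₁) ?hdiff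
  · exact hmain.2
  case hint =>
    refine (hWint.const_mul C₀).mono'
      ((hKc.comp (haff t)).mul hWc).aestronglyMeasurable
      (Filter.Eventually.of_forall fun y => ?_)
    rw [Real.norm_eq_abs, abs_mul, abs_of_nonneg (hW0 y)]
    exact mul_le_mul_of_nonneg_right (hKb _) (hW0 y)
  case hmeas =>
    exact (((hK'.continuous.comp (haff t)).clm_apply continuous_id).mul
      hWc).aestronglyMeasurable
  case hbound =>
    refine Filter.Eventually.of_forall fun y s _ => ?_
    rw [Real.norm_eq_abs, abs_mul, abs_of_nonneg (hW0 y)]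
    have h1 : |(fderiv ℝ K (s • y + ξ)) y| ≤ C₁ * ‖y‖ :=
      le_trans ((fderiv ℝ K (s • y + ξ)).le_opNorm y)
        (mul_le_mul_of_nonneg_right (hK1b _) (norm_nonneg y))
    calc |(fderiv ℝ K (s • y + ξ)) y| * W y ≤ (C₁ * ‖y‖) * W y :=
          mul_le_mul_of_nonneg_right h1 (hW0 y)
      _ = C₁ * (‖y‖ * W y) := by ring
  case hdiff =>
    refine Filter.Eventually.of_forall fun y s _ => ?_
    have hy : HasDerivAt (fun s : ℝ => s • y + ξ) y s := by
      simpa using ((hasDerivAt_id s).smul_const y).add_const ξ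
    exact ((hK.differentiable (by norm_num) _).hasFDerivAt.comp_hasDerivAt s hy).mul_const (W y)

lemma deriv_step2 (K : EuclideanSpace ℝ (Fin n) → ℝ) (hK : ContDiff ℝ 2 K)
    (C₁ C₂ : ℝ) (hK1b : ∀ x, ‖fderiv ℝ K x‖ ≤ C₁)
    (hK2b : ∀ x, ‖fderiv ℝ (fderiv ℝ K) x‖ ≤ C₂)
    (W : EuclideanSpace ℝ (Fin n) → ℝ) (hWc : Continuous W) (hW0 : ∀ y, 0 ≤ W y)
    (hWint1 : Integrable fun y => ‖y‖ * W y)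
    (hWint2 : Integrable fun y => ‖y‖ ^ 2 * W y)
    (ξ : EuclideanSpace ℝ (Fin n)) :
    HasDerivAt (fun t : ℝ => ∫ y, fderiv ℝ K (t • y + ξ) y * W y)
      (∫ y, fderiv ℝ (fderiv ℝ K) ξ y y * W y) (0 : ℝ) := by
  have hK' : ContDiff ℝ 1 (fderiv ℝ K) := hK.fderiv_right (m := 1) (by norm_num)
  have hK'' : Continuous (fderiv ℝ (fderiv ℝ K)) :=
    (hK'.fderiv_right (m := 0) (by norm_num)).continuous
  have haff : ∀ s : ℝ, Continuous fun y : EuclideanSpace ℝ (Fin n) => s • y + ξ :=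
    fun s => by fun_prop
  have hmain := hasDerivAt_integral_of_dominated_loc_of_deriv_le
    (F := fun s y => fderiv ℝ K (s • y + ξ) y * W y)
    (F' := fun s y => fderiv ℝ (fderiv ℝ K) (s • y + ξ) y y * W y)
    (bound := fun y => C₂ * (‖y‖ ^ 2 * W y)) (x₀ := 0) (s := Metric.ball 0 1) (Metric.ball_mem_nhds 0 one_pos)
    (Filter.Eventually.of_forall fun s =>
      (((hK'.continuous.comp (haff s)).clm_apply continuous_id).mul hWc).aestronglyMeasurable)
    ?hint ?hmeas ?hbound (hWint2.const_mul C₂) ?hdiff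
  · have h0 : ∀ y : EuclideanSpace ℝ (Fin n),
        fderiv ℝ (fderiv ℝ K) ((0:ℝ) • y + ξ) y y * W y
          = fderiv ℝ (fderiv ℝ K) ξ y y * W y := by
      intro y; rw [zero_smul, zero_add]
    have h := hmain.2
    simp only [h0] at h
    exact h
  case hint =>
    refine (hWint1.const_mul C₁).mono'
      (((hK'.continuous.comp (haff 0)).clm_apply continuous_id).mul hWc).aestronglyMeasurable
      (Filter.Eventually.of_forall fun y => ?_)
    rw [Real.norm_eq_abs, abs_mul, abs_of_nonneg (hW0 y)]
    have h1 : |(fderiv ℝ K ((0:ℝ) • y + ξ)) y| ≤ C₁ * ‖y‖ :=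
      le_trans ((fderiv ℝ K ((0:ℝ) • y + ξ)).le_opNorm y)
        (mul_le_mul_of_nonneg_right (hK1b _) (norm_nonneg y))
    calc |(fderiv ℝ K ((0:ℝ) • y + ξ)) y| * W y ≤ (C₁ * ‖y‖) * W y :=
          mul_le_mul_of_nonneg_right h1 (hW0 y)
      _ = C₁ * (‖y‖ * W y) := by ring
  case hmeas =>
    exact ((((hK''.comp (haff 0)).clm_apply continuous_id).clm_apply continuous_id).mul
      hWc).aestronglyMeasurable
  case hbound =>
    refine Filter.Eventually.of_forall fun y s _ => ?_
    rw [Real.norm_eq_abs, abs_mul, abs_of_nonneg (hW0 y)]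
    have h1 : |(fderiv ℝ (fderiv ℝ K) (s • y + ξ)) y y| ≤ C₂ * ‖y‖ ^ 2 := by
      calc |(fderiv ℝ (fderiv ℝ K) (s • y + ξ)) y y|
          ≤ ‖(fderiv ℝ (fderiv ℝ K) (s • y + ξ)) y‖ * ‖y‖ :=
            ((fderiv ℝ (fderiv ℝ K) (s • y + ξ)) y).le_opNorm y
        _ ≤ (‖fderiv ℝ (fderiv ℝ K) (s • y + ξ)‖ * ‖y‖) * ‖y‖ :=
            mul_le_mul_of_nonneg_right
              ((fderiv ℝ (fderiv ℝ K) (s • y + ξ)).le_opNorm y) (norm_nonneg y)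
        _ ≤ (C₂ * ‖y‖) * ‖y‖ := by
            have := mul_le_mul_of_nonneg_right (hK2b (s • y + ξ)) (norm_nonneg y)
            nlinarith [norm_nonneg y]
        _ = C₂ * ‖y‖ ^ 2 := by ring
    calc |(fderiv ℝ (fderiv ℝ K) (s • y + ξ)) y y| * W y ≤ (C₂ * ‖y‖ ^ 2) * W y :=
          mul_le_mul_of_nonneg_right h1 (hW0 y)
      _ = C₂ * (‖y‖ ^ 2 * W y) := by ring
  case hdiff =>
    refine Filter.Eventually.of_forall fun y s _ => ?_
    have hy : HasDerivAt (fun s : ℝ => s • y + ξ) y s := by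
      simpa using ((hasDerivAt_id s).smul_const y).add_const ξ
    have h1 : HasDerivAt (fun t : ℝ => fderiv ℝ K (t • y + ξ))
        (fderiv ℝ (fderiv ℝ K) (s • y + ξ) y) s :=
      ((hK'.differentiable one_ne_zero _).hasFDerivAt).comp_hasDerivAt s hy
    have h2 := (h1.clm_apply (hasDerivAt_const s y)).mul_const (W y)
    simpa using h2

end Aux

/-- `∂²_{μμ}Γ(0, ξ) = c₁ ΔK(ξ)`, where the Laplacian of `K` is the trace of its
Hessian, `ΔK(ξ) = ∑ᵢ ∂²K/∂ξᵢ²(ξ)`. -/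
theorem stmt8 (n : ℕ) (hn : 3 ≤ n) (γ : ℝ) (hγ : 0 < γ) (hγn : γ < (n : ℝ) / 2)
    (p : ℝ) (hp : p = ((n : ℝ) + 2 * γ) / ((n : ℝ) - 2 * γ))
    (α : ℝ) (hα : 0 < α)
    (K : EuclideanSpace ℝ (Fin n) → ℝ) (hK : ContDiff ℝ 2 K)
    (hKb : ∃ C, ∀ x, |K x| ≤ C)
    (hK1b : ∃ C, ∀ x, ‖fderiv ℝ K x‖ ≤ C)
    (hK2b : ∃ C, ∀ x, ‖fderiv ℝ (fderiv ℝ K) x‖ ≤ C)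
    (ξ : EuclideanSpace ℝ (Fin n)) :
    deriv (fun t => deriv (fun s => Gam n γ α p K s ξ) t) 0 =
      ((1 / ((n : ℝ) * (p + 1))) * ∫ y, ‖y‖ ^ 2 * z0 n γ α y ^ (p + 1)) *
        ∑ i : Fin n, fderiv ℝ (fderiv ℝ K) ξ (EuclideanSpace.single i (1 : ℝ))
          (EuclideanSpace.single i (1 : ℝ)) := by
  obtain ⟨C₀, hC₀⟩ := hKb
  obtain ⟨C₁, hC₁⟩ := hK1b
  obtain ⟨C₂, hC₂⟩ := hK2b
  -- the weight
  set w : ℝ → ℝ := fun t => α ^ (p + 1) * (1 + t ^ 2) ^ (-(n:ℝ)) with hw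
  have hWeq : ∀ y : EuclideanSpace ℝ (Fin n), z0 n γ α y ^ (p + 1) = w ‖y‖ :=
    fun y => w_eq γ α p hγn hp hα y
  have hw0 : ∀ t, 0 ≤ w t := fun t => by
    rw [hw]; positivity
  have hwc : Continuous fun y : EuclideanSpace ℝ (Fin n) => w ‖y‖ := by
    simp only [hw]
    exact continuous_const.mul (aux_cont n _)
  have hIk : ∀ k : ℕ, k ≤ 2 →
      Integrable fun y : EuclideanSpace ℝ (Fin n) => ‖y‖ ^ k * w ‖y‖ := by
    intro k hk
    have h := (aux_integrable hn k hk).const_mul (α ^ (p + 1))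
    refine h.congr (Filter.Eventually.of_forall fun y => ?_)
    simp only [hw]; ring
  have hWint : Integrable fun y : EuclideanSpace ℝ (Fin n) => w ‖y‖ := by
    have := hIk 0 (by norm_num)
    simpa using this
  have hWint1 : Integrable fun y : EuclideanSpace ℝ (Fin n) => ‖y‖ * w ‖y‖ := by
    have := hIk 1 (by norm_num)
    simpa using this
  have hWint2 : Integrable fun y : EuclideanSpace ℝ (Fin n) => ‖y‖ ^ 2 * w ‖y‖ :=
    hIk 2 le_rfl
  set W : EuclideanSpace ℝ (Fin n) → ℝ := fun y => w ‖y‖ with hWdef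
  -- rewrite Gam
  have hGam : (fun s => Gam n γ α p K s ξ)
      = fun s => (1 / (p + 1)) * ∫ y, K (s • y + ξ) * W y := by
    funext s
    unfold Gam
    congr 1
    exact integral_congr_ae (Filter.Eventually.of_forall fun y => by simp only [hWeq, hWdef])
  -- first derivative
  have hD1 : ∀ t : ℝ, deriv (fun s => Gam n γ α p K s ξ) t
      = (1 / (p + 1)) * ∫ y, fderiv ℝ K (t • y + ξ) y * W y := by
    intro t
    rw [hGam]
    exact ((deriv_step1 K hK C₀ C₁ hC₀ hC₁ W hwc (fun y => hw0 ‖y‖) hWint hWint1 ξ t).const_mul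
      (1 / (p + 1))).deriv
  -- second derivative
  have hD2 : deriv (fun t : ℝ => (1 / (p + 1)) * ∫ y, fderiv ℝ K (t • y + ξ) y * W y) 0
      = (1 / (p + 1)) * ∫ y, fderiv ℝ (fderiv ℝ K) ξ y y * W y :=
    ((deriv_step2 K hK C₁ C₂ hC₁ hC₂ W hwc (fun y => hw0 ‖y‖) hWint1 hWint2 ξ).const_mul (1 / (p + 1))).deriv
  have hfun : (fun t : ℝ => deriv (fun s => Gam n γ α p K s ξ) t)
      = fun t : ℝ => (1 / (p + 1)) * ∫ y, fderiv ℝ K (t • y + ξ) y * W y := funext hD1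
  rw [hfun, hD2]
  -- the Hessian integral
  set A := fderiv ℝ (fderiv ℝ K) ξ with hA
  set I := ∫ y : EuclideanSpace ℝ (Fin n), ‖y‖ ^ 2 * w ‖y‖ with hI
  have hAyy : ∀ y : EuclideanSpace ℝ (Fin n), A y y = ∑ i : Fin n, ∑ j : Fin n,
      (y i * y j) * (A (EuclideanSpace.single i (1:ℝ)) (EuclideanSpace.single j (1:ℝ))) := by
    intro y
    conv_lhs => rw [basis_expand y]
    rw [map_sum]
    refine (Finset.sum_congr rfl fun x _ => ?_).trans Finset.sum_comm
    rw [map_sum, ContinuousLinearMap.sum_apply]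
    refine Finset.sum_congr rfl fun i _ => ?_
    simp only [_root_.map_smul, ContinuousLinearMap.smul_apply, smul_eq_mul]
    ring
  have hexpand : ∀ y : EuclideanSpace ℝ (Fin n),
      A y y * W y = ∑ i : Fin n, ∑ j : Fin n,
        (y i * y j * w ‖y‖) * (A (EuclideanSpace.single i (1:ℝ)) (EuclideanSpace.single j (1:ℝ))) := by
    intro y
    rw [hAyy y, Finset.sum_mul]
    refine Finset.sum_congr rfl fun i _ => ?_
    rw [Finset.sum_mul]
    refine Finset.sum_congr rfl fun j _ => ?_
    show _ * w ‖y‖ = _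
    ring
  have hkey : ∀ i j : Fin n, (∫ y : EuclideanSpace ℝ (Fin n), y i * y j * w ‖y‖)
      = if i = j then (1 / (n:ℝ)) * I else 0 := by
    intro i j
    by_cases h : i = j
    · subst h
      rw [if_pos rfl]
      exact aux_diag (by omega) w hw0 hwc hWint2 i
    · rw [if_neg h]
      exact aux_offdiag w i j h
  have hIntij : ∀ i j : Fin n, Integrable fun y : EuclideanSpace ℝ (Fin n) =>
      (y i * y j * w ‖y‖) * (A (EuclideanSpace.single i (1:ℝ)) (EuclideanSpace.single j (1:ℝ))) :=
    fun i j => (aux_coord_int w hw0 hwc hWint2 i j).mul_const _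
  have hint : ∫ y, A y y * W y = ((1 / (n:ℝ)) * I) *
      ∑ i : Fin n, A (EuclideanSpace.single i (1:ℝ)) (EuclideanSpace.single i (1:ℝ)) := by
    rw [integral_congr_ae (Filter.Eventually.of_forall hexpand)]
    rw [integral_finset_sum _ (fun i _ => integrable_finset_sum _ (fun j _ => hIntij i j))]
    have : ∀ i : Fin n, (∫ y : EuclideanSpace ℝ (Fin n), ∑ j : Fin n,
        (y i * y j * w ‖y‖) * (A (EuclideanSpace.single i (1:ℝ)) (EuclideanSpace.single j (1:ℝ))))
        = ((1 / (n:ℝ)) * I) * (A (EuclideanSpace.single i (1:ℝ)) (EuclideanSpace.single i (1:ℝ))) := by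
      intro i
      rw [integral_finset_sum _ (fun j _ => hIntij i j)]
      have hterm : ∀ j : Fin n, (∫ y : EuclideanSpace ℝ (Fin n),
          (y i * y j * w ‖y‖) * (A (EuclideanSpace.single i (1:ℝ)) (EuclideanSpace.single j (1:ℝ))))
          = (if i = j then (1 / (n:ℝ)) * I else 0)
            * (A (EuclideanSpace.single i (1:ℝ)) (EuclideanSpace.single j (1:ℝ))) := by
        intro j
        rw [integral_mul_const, hkey i j]
      rw [Finset.sum_congr rfl fun j _ => hterm j]
      simp [Finset.sum_ite_eq]
    rw [Finset.sum_congr rfl fun i _ => this i, ← Finset.mul_sum]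
  rw [hint]
  have hIeq : (∫ y : EuclideanSpace ℝ (Fin n), ‖y‖ ^ 2 * z0 n γ α y ^ (p + 1)) = I := by
    rw [hI]
    exact integral_congr_ae (Filter.Eventually.of_forall fun y => by simp only [hWeq])
  rw [hIeq]
  have hn' : (n : ℝ) ≠ 0 := by positivity
  rw [one_div, one_div, one_div, mul_inv]
  ring
end

section
/- Let K : ℝⁿ → ℝ be bounded and continuous, let ξ ∈ ℝⁿ, and suppose there exist β ∈ (1, n) and a continuous function Q : ℝⁿ → ℝ such that Q(λx) = λ^β Q(x) for all λ ≥ 0 and x ∈ ℝⁿ, and K(x) = K(ξ) + Q(x − ξ) + o(|x − ξ|^β) as x → ξ. Then the function y ↦ Q(y) z₀(y)^{p+1} is integrable on ℝⁿ and lim_{μ → 0⁺} (Γ(μ, ξ) − Γ(0, ξ))/μ^β = A, where A = (1/(p+1)) ∫_{ℝⁿ} Q(y) z₀(y)^{p+1} dy. -/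
open MeasureTheory Filter
open scoped Topology Asymptotics

set_option maxHeartbeats 1000000 in
theorem stmt9 (n : ℕ) (hn : 1 ≤ n) (γ : ℝ) (hγ : 0 < γ) (hγn : γ < (n : ℝ) / 2)
    (p : ℝ) (hp : p = ((n : ℝ) + 2 * γ) / ((n : ℝ) - 2 * γ))
    (α : ℝ) (hα : 0 < α)
    (K : EuclideanSpace ℝ (Fin n) → ℝ) (hKc : Continuous K)
    (hKb : ∃ C, ∀ x, |K x| ≤ C)
    (ξ : EuclideanSpace ℝ (Fin n))
    (β : ℝ) (hβ1 : 1 < β) (hβn : β < (n : ℝ))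
    (Q : EuclideanSpace ℝ (Fin n) → ℝ) (hQc : Continuous Q)
    (hQhom : ∀ l : ℝ, 0 ≤ l → ∀ x, Q (l • x) = l ^ β * Q x)
    (hTaylor : (fun x => K x - K ξ - Q (x - ξ)) =o[𝓝 ξ] fun x => ‖x - ξ‖ ^ β) :
    Integrable (fun y => Q y * z0 n γ α y ^ (p + 1)) ∧
    Tendsto (fun μ : ℝ => (Gam n γ α p K μ ξ - Gam n γ α p K 0 ξ) / μ ^ β)
      (𝓝[>] 0)
      (𝓝 ((1 / (p + 1)) * ∫ y, Q y * z0 n γ α y ^ (p + 1))) := by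
  obtain ⟨C, hC⟩ := hKb
  have hC0 : 0 ≤ C := (abs_nonneg _).trans (hC ξ)
  have hβ0 : (0:ℝ) < β := by linarith
  have hd : (0:ℝ) < (n:ℝ) - 2*γ := by linarith
  have hn0 : (0:ℝ) < n := by exact_mod_cast hn
  -- the value of z0 ^ (p+1)
  have hzval : ∀ y : EuclideanSpace ℝ (Fin n),
      z0 n γ α y ^ (p + 1) = α ^ (p + 1) * (1 + ‖y‖ ^ 2) ^ (-(2 * (n:ℝ)) / 2) := by
    intro y
    have hB : (0:ℝ) < 1 + ‖y‖^2 := by positivity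
    have he : -(((n : ℝ) - 2 * γ) / 2) * (p + 1) = -(2 * (n:ℝ)) / 2 := by
      rw [hp]; field_simp; ring
    rw [z0, Real.mul_rpow hα.le (Real.rpow_nonneg hB.le _), ← Real.rpow_mul hB.le, he]
  set z : EuclideanSpace ℝ (Fin n) → ℝ :=
    fun y => α ^ (p + 1) * (1 + ‖y‖ ^ 2) ^ (-(2 * (n:ℝ)) / 2) with hzdef
  have hz_pos : ∀ y, 0 < z y := fun y => by
    have hB : (0:ℝ) < 1 + ‖y‖^2 := by positivity
    have := Real.rpow_pos_of_pos hB (-(2 * (n:ℝ)) / 2)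
    have := Real.rpow_pos_of_pos hα (p+1)
    positivity
  have hzc : Continuous z := by
    apply Continuous.mul continuous_const
    apply Continuous.rpow_const (by continuity)
    intro y; left; positivity
  have hnfin : (Module.finrank ℝ (EuclideanSpace ℝ (Fin n)) : ℝ) = n := by
    rw [finrank_euclideanSpace_fin]
  have hzint : Integrable z := by
    apply Integrable.const_mul
    apply integrable_rpow_neg_one_add_norm_sq (r := 2 * n)
    rw [hnfin]; linarith
  -- the bound on z by (1+‖y‖)^(-2n)
  have hz_le : ∀ y, z y ≤ α ^ (p+1) * ((2:ℝ) ^ ((2*(n:ℝ))/2) * (1 + ‖y‖) ^ (-(2*(n:ℝ)))) := by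
    intro y
    have := rpow_neg_one_add_norm_sq_le (E := EuclideanSpace ℝ (Fin n)) y
      (r := 2*(n:ℝ)) (by linarith)
    have hαp : (0:ℝ) ≤ α ^ (p+1) := (Real.rpow_pos_of_pos hα _).le
    exact mul_le_mul_of_nonneg_left this hαp
  -- integrability of the weighted bound
  have hwint : Integrable (fun y : EuclideanSpace ℝ (Fin n) => ‖y‖ ^ β * z y) := by
    have hr : (Module.finrank ℝ (EuclideanSpace ℝ (Fin n)) : ℝ) < 2*(n:ℝ) - β := by
      rw [hnfin]; linarith
    have hbig : Integrable (fun y : EuclideanSpace ℝ (Fin n) =>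
        (α ^ (p+1) * (2:ℝ) ^ ((2*(n:ℝ))/2)) * (1 + ‖y‖) ^ (-(2*(n:ℝ) - β))) :=
      (integrable_one_add_norm hr).const_mul _
    refine hbig.mono' ?_ (Eventually.of_forall fun y => ?_)
    · exact ((Continuous.rpow_const continuous_norm fun x => Or.inr hβ0.le).mul hzc).aestronglyMeasurable
    · have h1 : (0:ℝ) ≤ ‖y‖ ^ β := Real.rpow_nonneg (norm_nonneg _) _
      have h0y : (0:ℝ) < 1 + ‖y‖ := by positivity
      rw [Real.norm_of_nonneg (mul_nonneg h1 (hz_pos y).le)]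
      calc ‖y‖ ^ β * z y
          ≤ (1 + ‖y‖) ^ β * (α ^ (p+1) * ((2:ℝ) ^ ((2*(n:ℝ))/2) * (1 + ‖y‖) ^ (-(2*(n:ℝ))))) := by
            apply mul_le_mul (Real.rpow_le_rpow (norm_nonneg _) (by linarith) hβ0.le)
              (hz_le y) (hz_pos y).le (Real.rpow_nonneg h0y.le _)
        _ = (α ^ (p+1) * (2:ℝ) ^ ((2*(n:ℝ))/2)) * (1 + ‖y‖) ^ (-(2*(n:ℝ) - β)) := by
            rw [show -(2*(n:ℝ)-β) = β + -(2*(n:ℝ)) by ring, Real.rpow_add h0y]; ring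
  -- bound on Q
  obtain ⟨M, hM0, hM⟩ : ∃ M, 0 ≤ M ∧ ∀ y : EuclideanSpace ℝ (Fin n), |Q y| ≤ M * ‖y‖ ^ β := by
    obtain ⟨M0, hM0⟩ := (isCompact_closedBall (0 : EuclideanSpace ℝ (Fin n)) 1).exists_bound_of_continuousOn hQc.continuousOn
    refine ⟨max M0 0, le_max_right _ _, fun y => ?_⟩
    rcases eq_or_ne y 0 with rfl | hy
    · have : Q 0 = 0 := by
        have := hQhom 0 le_rfl 0
        simpa [Real.zero_rpow hβ0.ne'] using this
      simp [this, Real.zero_rpow hβ0.ne',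
        mul_nonneg (le_max_right M0 0) (le_refl (0:ℝ))]
    · have hny : (0:ℝ) < ‖y‖ := norm_pos_iff.mpr hy
      have hu : ‖y‖⁻¹ • y ∈ Metric.closedBall (0 : EuclideanSpace ℝ (Fin n)) 1 := by
        simp [norm_smul, abs_of_pos (inv_pos.mpr hny), inv_mul_cancel₀ hny.ne']
      have hQy : Q y = ‖y‖ ^ β * Q (‖y‖⁻¹ • y) := by
        rw [← hQhom ‖y‖ (norm_nonneg _) (‖y‖⁻¹ • y), smul_inv_smul₀ hny.ne']
      rw [hQy, abs_mul, abs_of_nonneg (Real.rpow_nonneg (norm_nonneg _) _), mul_comm]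
      apply mul_le_mul_of_nonneg_right _ (Real.rpow_nonneg (norm_nonneg _) _)
      exact (hM0 _ hu).trans (le_max_left _ _)
  -- first goal: integrability of Q * z
  have hQz_int : Integrable (fun y => Q y * z y) := by
    refine (hwint.const_mul M).mono' (hQc.mul hzc).aestronglyMeasurable
      (Eventually.of_forall fun y => ?_)
    rw [Real.norm_eq_abs, abs_mul, abs_of_nonneg (hz_pos y).le]
    calc |Q y| * z y ≤ (M * ‖y‖ ^ β) * z y :=
        mul_le_mul_of_nonneg_right (hM y) (hz_pos y).le
      _ = M * (‖y‖ ^ β * z y) := mul_assoc _ _ _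
  -- rewrite the goal in terms of z
  have hgoal_rw : (fun y => Q y * z0 n γ α y ^ (p + 1)) = fun y => Q y * z y := by
    funext y; rw [hzval y]
  rw [hgoal_rw]
  refine ⟨hQz_int, ?_⟩
  -- δ from the Taylor hypothesis
  obtain ⟨δ, hδ0, hδ⟩ : ∃ δ > 0, ∀ x : EuclideanSpace ℝ (Fin n),
      ‖x - ξ‖ < δ → |K x - K ξ - Q (x - ξ)| ≤ ‖x - ξ‖ ^ β := by
    have := (hTaylor.def one_pos)
    rw [Metric.eventually_nhds_iff] at this
    obtain ⟨δ, hδ0, hδ⟩ := this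
    refine ⟨δ, hδ0, fun x hx => ?_⟩
    have := hδ (show dist x ξ < δ by rwa [dist_eq_norm])
    simpa [Real.norm_eq_abs, abs_of_nonneg (Real.rpow_nonneg (norm_nonneg _) _)] using this
  -- the family F
  set F : ℝ → EuclideanSpace ℝ (Fin n) → ℝ :=
    fun μ y => (K (μ • y + ξ) - K ξ) / μ ^ β * z y with hF
  -- dominated convergence
  have hDCT : Tendsto (fun μ => ∫ y, F μ y) (𝓝[>] (0:ℝ)) (𝓝 (∫ y, Q y * z y)) := by
    apply tendsto_integral_filter_of_dominated_convergence
      (bound := fun y => (M + 1 + 2 * C / δ ^ β) * (‖y‖ ^ β * z y))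
    · filter_upwards with μ
      apply Continuous.aestronglyMeasurable
      rw [hF]
      exact (((hKc.comp ((continuous_id.const_smul μ).add continuous_const)).sub continuous_const).div_const _).mul hzc
    · filter_upwards [self_mem_nhdsWithin] with μ (hμ : 0 < μ)
      filter_upwards with y
      have hμβ : (0:ℝ) < μ ^ β := Real.rpow_pos_of_pos hμ _
      have hyβ : (0:ℝ) ≤ ‖y‖ ^ β := Real.rpow_nonneg (norm_nonneg _) _
      have hnum : |K (μ • y + ξ) - K ξ| ≤ (M + 1 + 2 * C / δ ^ β) * (μ ^ β * ‖y‖ ^ β) := by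
        have hsm : ‖μ • y‖ = μ * ‖y‖ := by rw [norm_smul, Real.norm_eq_abs, abs_of_pos hμ]
        have hsmβ : ‖μ • y‖ ^ β = μ ^ β * ‖y‖ ^ β := by
          rw [hsm, Real.mul_rpow hμ.le (norm_nonneg _)]
        rcases lt_or_ge (μ * ‖y‖) δ with hcase | hcase
        · have hx : ‖(μ • y + ξ) - ξ‖ < δ := by
            rwa [add_sub_cancel_right, hsm]
          have h1 := hδ _ hx
          rw [add_sub_cancel_right] at h1
          have h2 : |Q (μ • y)| ≤ M * (μ ^ β * ‖y‖ ^ β) := by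
            calc |Q (μ • y)| ≤ M * ‖μ • y‖ ^ β := hM _
              _ = M * (μ ^ β * ‖y‖ ^ β) := by rw [hsmβ]
          have h3 : |K (μ • y + ξ) - K ξ| ≤ |Q (μ • y)| + ‖μ • y‖ ^ β := by
            have := abs_sub_abs_le_abs_sub (K (μ • y + ξ) - K ξ) (Q (μ • y))
            calc |K (μ • y + ξ) - K ξ|
                = |(K (μ • y + ξ) - K ξ - Q (μ • y)) + Q (μ • y)| := by ring_nf
              _ ≤ |K (μ • y + ξ) - K ξ - Q (μ • y)| + |Q (μ • y)| := abs_add_le _ _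
              _ ≤ ‖μ • y‖ ^ β + |Q (μ • y)| := by
                  apply add_le_add_left; exact h1
              _ = |Q (μ • y)| + ‖μ • y‖ ^ β := by ring
          have hq : (0:ℝ) ≤ 2 * C / δ ^ β := by positivity
          calc |K (μ • y + ξ) - K ξ| ≤ |Q (μ • y)| + ‖μ • y‖ ^ β := h3
            _ ≤ M * (μ ^ β * ‖y‖ ^ β) + μ ^ β * ‖y‖ ^ β := by
                apply add_le_add h2; rw [hsmβ]
            _ = (M + 1) * (μ ^ β * ‖y‖ ^ β) := by ring
            _ ≤ (M + 1 + 2 * C / δ ^ β) * (μ ^ β * ‖y‖ ^ β) := by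
                apply mul_le_mul_of_nonneg_right (by linarith) (by positivity)
        · have hδβ : δ ^ β ≤ μ ^ β * ‖y‖ ^ β := by
            rw [← Real.mul_rpow hμ.le (norm_nonneg _)]
            exact Real.rpow_le_rpow hδ0.le hcase hβ0.le
          have h2C : |K (μ • y + ξ) - K ξ| ≤ 2 * C := by
            calc |K (μ • y + ξ) - K ξ| ≤ |K (μ • y + ξ)| + |K ξ| := abs_sub _ _
              _ ≤ C + C := add_le_add (hC _) (hC _)
              _ = 2 * C := by ring
          have hδβ0 : (0:ℝ) < δ ^ β := Real.rpow_pos_of_pos hδ0 _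
          calc |K (μ • y + ξ) - K ξ| ≤ 2 * C := h2C
            _ = (2 * C / δ ^ β) * δ ^ β := by field_simp
            _ ≤ (2 * C / δ ^ β) * (μ ^ β * ‖y‖ ^ β) := by
                apply mul_le_mul_of_nonneg_left hδβ (by positivity)
            _ ≤ (M + 1 + 2 * C / δ ^ β) * (μ ^ β * ‖y‖ ^ β) := by
                apply mul_le_mul_of_nonneg_right (by linarith) (by positivity)
      rw [hF]
      rw [Real.norm_eq_abs, abs_mul, abs_of_nonneg (hz_pos y).le, abs_div,
        abs_of_pos hμβ]
      rw [div_mul_eq_mul_div, div_le_iff₀ hμβ]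
      calc |K (μ • y + ξ) - K ξ| * z y
          ≤ ((M + 1 + 2 * C / δ ^ β) * (μ ^ β * ‖y‖ ^ β)) * z y :=
            mul_le_mul_of_nonneg_right hnum (hz_pos y).le
        _ = (M + 1 + 2 * C / δ ^ β) * (‖y‖ ^ β * z y) * μ ^ β := by ring
    · exact hwint.const_mul (M + 1 + 2 * C / δ ^ β)
    · filter_upwards with y
      -- pointwise convergence
      have h1 : Tendsto (fun μ : ℝ => μ • y + ξ) (𝓝[>] 0) (𝓝 ξ) := by
        have hc : Continuous fun μ : ℝ => μ • y + ξ :=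
          (continuous_id.smul continuous_const).add continuous_const
        have := hc.tendsto' 0 ξ (by simp)
        exact this.mono_left nhdsWithin_le_nhds
      have h2 := hTaylor.comp_tendsto h1
      simp only [Function.comp_def, add_sub_cancel_right] at h2
      have h3 : (fun μ : ℝ => ‖μ • y‖ ^ β) =O[𝓝[>] (0:ℝ)] fun μ => μ ^ β := by
        apply Asymptotics.IsBigO.of_bound (‖y‖ ^ β)
        filter_upwards [self_mem_nhdsWithin] with μ (hμ : 0 < μ)
        rw [Real.norm_eq_abs, Real.norm_eq_abs, norm_smul, Real.norm_eq_abs,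
          abs_of_pos hμ, Real.mul_rpow hμ.le (norm_nonneg _),
          abs_of_nonneg (by positivity), abs_of_nonneg (Real.rpow_nonneg hμ.le _)]
        ring_nf
        exact le_refl _
      have h4 := (h2.trans_isBigO h3).tendsto_div_nhds_zero
      have h5 : Tendsto (fun μ : ℝ =>
          (K (μ • y + ξ) - K ξ - Q (μ • y)) / μ ^ β + Q y) (𝓝[>] 0) (𝓝 (Q y)) := by
        have := h4.add (tendsto_const_nhds (x := Q y))
        simpa using this
      have h6 : Tendsto (fun μ : ℝ => (K (μ • y + ξ) - K ξ) / μ ^ β)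
          (𝓝[>] 0) (𝓝 (Q y)) := by
        apply h5.congr'
        filter_upwards [self_mem_nhdsWithin] with μ (hμ : 0 < μ)
        have hμβ : (μ:ℝ) ^ β ≠ 0 := (Real.rpow_pos_of_pos hμ _).ne'
        rw [hQhom μ hμ.le y]
        field_simp
        ring
      have := h6.mul_const (z y)
      exact this
  -- identify the quotient with the integral of F, eventually
  have hkey : ∀ᶠ μ in 𝓝[>] (0:ℝ),
      (Gam n γ α p K μ ξ - Gam n γ α p K 0 ξ) / μ ^ β = (1 / (p + 1)) * ∫ y, F μ y := by
    filter_upwards [self_mem_nhdsWithin] with μ (hμ : 0 < μ)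
    have hint1 : Integrable (fun y => K (μ • y + ξ) * z y) := by
      refine (hzint.const_mul C).mono'
        ((hKc.comp ((continuous_id.const_smul μ).add continuous_const)).mul hzc).aestronglyMeasurable
        (Eventually.of_forall fun y => ?_)
      rw [Real.norm_eq_abs, abs_mul, abs_of_nonneg (hz_pos y).le]
      exact mul_le_mul_of_nonneg_right (hC _) (hz_pos y).le
    have hint0 : Integrable (fun y => K ξ * z y) := hzint.const_mul _
    have hG : Gam n γ α p K μ ξ = (1 / (p + 1)) * ∫ y, K (μ • y + ξ) * z y := by
      rw [Gam]; congr 1; apply integral_congr_ae; filter_upwards with y; rw [hzval]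
    have hG0 : Gam n γ α p K 0 ξ = (1 / (p + 1)) * ∫ y, K ξ * z y := by
      rw [Gam]; congr 1; apply integral_congr_ae; filter_upwards with y
      rw [hzval]; simp; exact Or.inl rfl
    rw [hG, hG0, ← mul_sub, ← integral_sub hint1 hint0, mul_div_assoc, ← integral_div]
    congr 1
    apply integral_congr_ae; filter_upwards with y
    rw [hF]
    ring
  exact Tendsto.congr' (hkey.mono fun μ h => h.symm) (hDCT.const_mul (1 / (p + 1)))
end

section
/- Let γ ∈ (0, n/2) and p = (n+2γ)/(n−2γ). There exists a constant α > 0 such that the function u(x) = α(1+|x|²)^{−(n−2γ)/2} satisfies, for every x ∈ ℝⁿ, u(x) = c_{n,γ} ∫_{ℝⁿ} u(y)^p |x − y|^{−(n−2γ)} dy, where c_{n,γ} = Γ((n−2γ)/2)/(4^γ π^{n/2} Γ(γ)) is the Riesz potential constant. -/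
open MeasureTheory

open Real Set

lemma intOn_gamma {b r : ℝ} (hb : 0 < b) (hr : 0 < r) :
    IntegrableOn (fun t : ℝ => t ^ (b - 1) * Real.exp (-(r * t))) (Ioi 0) := by
  have h0 := Real.GammaIntegral_convergent hb
  have h1 : IntegrableOn (fun t : ℝ => Real.exp (-(r * t)) * (r * t) ^ (b - 1)) (Ioi 0) := by
    have := (integrableOn_Ioi_comp_mul_left_iff
      (fun x : ℝ => Real.exp (-x) * x ^ (b - 1)) 0 hr).mpr (by simpa using h0)
    simpa using this
  have h2 : IntegrableOn (fun t : ℝ => r ^ (b-1) * (t ^ (b - 1) * Real.exp (-(r * t)))) (Ioi 0) := by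
    apply h1.congr_fun ?_ measurableSet_Ioi
    intro t ht
    simp only
    rw [Real.mul_rpow hr.le (le_of_lt ht)]
    ring
  have h3 := h2.const_mul (r ^ (b-1))⁻¹
  have hrne : (r:ℝ) ^ (b-1) ≠ 0 := (Real.rpow_pos_of_pos hr _).ne'
  simpa [IntegrableOn, inv_mul_cancel_left₀ hrne] using h3

lemma lint_gamma {b r : ℝ} (hb : 0 < b) (hr : 0 < r) :
    ∫⁻ t in Ioi (0:ℝ), ENNReal.ofReal (t ^ (b - 1) * Real.exp (-(r * t)))
      = ENNReal.ofReal (Real.Gamma b * r ^ (-b)) := by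
  rw [← ofReal_integral_eq_lintegral_ofReal (intOn_gamma hb hr) ?_]
  · rw [integral_rpow_mul_exp_neg_mul_Ioi hb hr]
    congr 1
    rw [Real.rpow_neg hr.le, one_div, Real.inv_rpow hr.le]
    ring
  · filter_upwards [ae_restrict_mem measurableSet_Ioi] with t ht
    have : (0:ℝ) < t := ht
    positivity

lemma integrable_gauss (n : ℕ) {c : ℝ} (hc : 0 < c) :
    Integrable (fun v : EuclideanSpace ℝ (Fin n) => Real.exp (-(c * ‖v‖ ^ 2))) := by
  have h := (GaussianFourier.integrable_cexp_neg_mul_sq_norm_add (V := EuclideanSpace ℝ (Fin n))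
    (b := (c:ℂ)) (by simpa using hc) 0 0).norm
  apply h.congr
  filter_upwards with v
  simp [Complex.norm_exp, ← Complex.ofReal_pow, neg_mul]

lemma lint_gauss (n : ℕ) {c : ℝ} (hc : 0 < c) (z : EuclideanSpace ℝ (Fin n)) :
    ∫⁻ y : EuclideanSpace ℝ (Fin n), ENNReal.ofReal (Real.exp (-(c * ‖y - z‖ ^ 2)))
      = ENNReal.ofReal ((Real.pi / c) ^ ((n:ℝ) / 2)) := by
  have hI := (integrable_gauss n hc).comp_sub_right z
  rw [← ofReal_integral_eq_lintegral_ofReal hI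
    (Filter.Eventually.of_forall fun y => (Real.exp_pos _).le)]
  congr 1
  rw [integral_sub_right_eq_self (fun v : EuclideanSpace ℝ (Fin n) =>
    Real.exp (-(c * ‖v‖ ^ 2))) z]
  have := GaussianFourier.integral_rexp_neg_mul_sq_norm (V := EuclideanSpace ℝ (Fin n)) hc
  simp only [neg_mul] at this ⊢
  rw [this, finrank_euclideanSpace_fin]

lemma lint_scale {g : ℝ → ENNReal} (hg : Measurable g) {u : ℝ} (hu : 0 < u) :
    ∫⁻ t in Ioi (0:ℝ), g t = ENNReal.ofReal u * ∫⁻ v in Ioi (0:ℝ), g (u * v) := by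
  have hpre : (fun v : ℝ => u * v) ⁻¹' (Ioi 0) = Ioi 0 := by
    ext v; simp [mul_pos_iff_of_pos_left, hu]
  have h1 : Measure.map (fun v : ℝ => u * v) (volume.restrict (Ioi 0))
      = ENNReal.ofReal u⁻¹ • volume.restrict (Ioi 0) := by
    rw [← hpre, ← Measure.restrict_map (measurable_const_mul u) measurableSet_Ioi,
      Real.map_volume_mul_left hu.ne', Measure.restrict_smul, hpre,
      abs_of_pos (inv_pos.mpr hu)]
  have h2 : ∫⁻ v in Ioi (0:ℝ), g (u * v)
      = ENNReal.ofReal u⁻¹ * ∫⁻ t in Ioi (0:ℝ), g t := by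
    rw [← lintegral_map hg (measurable_const_mul u), h1, lintegral_smul_measure, smul_eq_mul]
  rw [h2, ← mul_assoc, ← ENNReal.ofReal_mul hu.le, mul_inv_cancel₀ hu.ne', ENNReal.ofReal_one,
    one_mul]

lemma lint_beta {b c lam : ℝ} (hb : 0 < b) (hbc : b < c) (hlam : 0 < lam) :
    ∫⁻ v in Ioi (0:ℝ), ENNReal.ofReal (v ^ (b - 1) * (1 + lam * v) ^ (-c))
      = ENNReal.ofReal (Real.Gamma b * Real.Gamma (c - b) / Real.Gamma c * lam ^ (-b)) := by
  have hc : 0 < c := hb.trans hbc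
  have hGc : 0 < Real.Gamma c := Real.Gamma_pos_of_pos hc
  have hmeas : Measurable (Function.uncurry fun v w : ℝ =>
      ENNReal.ofReal ((w ^ (c-1) * Real.exp (-w)) * (v ^ (b-1) * Real.exp (-(lam * w * v))))) := by
    apply Measurable.ennreal_ofReal
    exact ((measurable_snd.pow_const _).mul (measurable_snd.neg.exp)).mul
      ((measurable_fst.pow_const _).mul
        (((measurable_snd.const_mul lam).mul measurable_fst).neg.exp))
  have key : (ENNReal.ofReal (Real.Gamma c)) *
        ∫⁻ v in Ioi (0:ℝ), ENNReal.ofReal (v ^ (b - 1) * (1 + lam * v) ^ (-c))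
      = (ENNReal.ofReal (Real.Gamma c)) *
        ENNReal.ofReal (Real.Gamma b * Real.Gamma (c - b) / Real.Gamma c * lam ^ (-b)) := by
    rw [← lintegral_const_mul' _ _ ENNReal.ofReal_ne_top]
    have step1 : ∀ v ∈ Ioi (0:ℝ),
        ENNReal.ofReal (Real.Gamma c) * ENNReal.ofReal (v ^ (b - 1) * (1 + lam * v) ^ (-c))
          = ∫⁻ w in Ioi (0:ℝ), ENNReal.ofReal
              ((w ^ (c-1) * Real.exp (-w)) * (v ^ (b-1) * Real.exp (-(lam * w * v)))) := by
      intro v hv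
      have hv0 : (0:ℝ) < v := hv
      have h1 : (0:ℝ) < 1 + lam * v := by positivity
      have h2 := lint_gamma hc h1
      calc ENNReal.ofReal (Real.Gamma c) * ENNReal.ofReal (v ^ (b - 1) * (1 + lam * v) ^ (-c))
          = ENNReal.ofReal (v ^ (b-1)) * ENNReal.ofReal (Real.Gamma c * (1 + lam * v) ^ (-c)) := by
            rw [← ENNReal.ofReal_mul hGc.le, ← ENNReal.ofReal_mul (by positivity)]
            ring_nf
        _ = ENNReal.ofReal (v ^ (b-1)) *
              ∫⁻ w in Ioi (0:ℝ), ENNReal.ofReal (w ^ (c-1) * Real.exp (-((1 + lam * v) * w))) := by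
            rw [h2]
        _ = ∫⁻ w in Ioi (0:ℝ), ENNReal.ofReal
              ((w ^ (c-1) * Real.exp (-w)) * (v ^ (b-1) * Real.exp (-(lam * w * v)))) := by
            rw [← lintegral_const_mul' _ _ ENNReal.ofReal_ne_top]
            apply lintegral_congr
            intro w
            rw [← ENNReal.ofReal_mul (by positivity)]
            congr 1
            rw [show -((1 + lam * v) * w) = -w + -(lam * w * v) by ring, Real.exp_add]
            ring
    rw [setLIntegral_congr_fun measurableSet_Ioi step1]
    rw [lintegral_lintegral_swap hmeas.aemeasurable]
    have step2 : ∀ w ∈ Ioi (0:ℝ),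
        ∫⁻ v in Ioi (0:ℝ), ENNReal.ofReal
            ((w ^ (c-1) * Real.exp (-w)) * (v ^ (b-1) * Real.exp (-(lam * w * v))))
          = ENNReal.ofReal (Real.Gamma b * lam ^ (-b)) *
              ENNReal.ofReal (w ^ (c - b - 1) * Real.exp (-(1 * w))) := by
      intro w hw
      have hw0 : (0:ℝ) < w := hw
      have hlw : (0:ℝ) < lam * w := by positivity
      calc ∫⁻ v in Ioi (0:ℝ), ENNReal.ofReal
            ((w ^ (c-1) * Real.exp (-w)) * (v ^ (b-1) * Real.exp (-(lam * w * v))))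
          = ENNReal.ofReal (w ^ (c-1) * Real.exp (-w)) *
              ∫⁻ v in Ioi (0:ℝ), ENNReal.ofReal (v ^ (b-1) * Real.exp (-(lam * w * v))) := by
            rw [← lintegral_const_mul' _ _ ENNReal.ofReal_ne_top]
            apply lintegral_congr
            intro v
            rw [← ENNReal.ofReal_mul (by positivity)]
        _ = ENNReal.ofReal (w ^ (c-1) * Real.exp (-w)) *
              ENNReal.ofReal (Real.Gamma b * (lam * w) ^ (-b)) := by
            rw [← lint_gamma hb hlw]
        _ = ENNReal.ofReal (Real.Gamma b * lam ^ (-b)) *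
              ENNReal.ofReal (w ^ (c - b - 1) * Real.exp (-(1 * w))) := by
            rw [← ENNReal.ofReal_mul (by positivity), ← ENNReal.ofReal_mul (by positivity)]
            congr 1
            rw [Real.mul_rpow hlam.le hw0.le,
              show w ^ (c - b - 1) = w ^ (c - 1) * w ^ (-b) by
                rw [← Real.rpow_add hw0]; ring_nf,
              one_mul]
            ring
    rw [setLIntegral_congr_fun measurableSet_Ioi step2,
      lintegral_const_mul' _ _ ENNReal.ofReal_ne_top, lint_gamma (sub_pos.mpr hbc) one_pos]
    rw [← ENNReal.ofReal_mul (by positivity), ← ENNReal.ofReal_mul (by positivity)]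
    congr 1
    rw [Real.one_rpow]
    field_simp
  exact (ENNReal.mul_right_inj (ENNReal.ofReal_pos.mpr hGc).ne' ENNReal.ofReal_ne_top).mp key

lemma sq_complete {n : ℕ} {u t : ℝ} (hu : 0 < u) (ht : 0 < t)
    (x y : EuclideanSpace ℝ (Fin n)) :
    u * ‖y‖ ^ 2 + t * ‖x - y‖ ^ 2
      = (u + t) * ‖y - (t / (u + t)) • x‖ ^ 2 + u * t / (u + t) * ‖x‖ ^ 2 := by
  have hut : (0:ℝ) < u + t := by positivity
  have h1 : ‖x - y‖ ^ 2 = ‖x‖ ^ 2 - 2 * inner ℝ x y + ‖y‖ ^ 2 := norm_sub_sq_real x y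
  have h2 : ‖y - (t / (u + t)) • x‖ ^ 2
      = ‖y‖ ^ 2 - 2 * (t / (u + t)) * inner ℝ x y + (t / (u + t)) ^ 2 * ‖x‖ ^ 2 := by
    rw [norm_sub_sq_real, real_inner_smul_right, norm_smul, real_inner_comm]
    rw [mul_pow, Real.norm_eq_abs, sq_abs]
    ring
  rw [h1, h2]
  field_simp
  ring

lemma lint_gauss2 (n : ℕ) {u t : ℝ} (hu : 0 < u) (ht : 0 < t) (x : EuclideanSpace ℝ (Fin n)) :
    ∫⁻ y : EuclideanSpace ℝ (Fin n), ENNReal.ofReal (Real.exp (-(u * ‖y‖ ^ 2 + t * ‖x - y‖ ^ 2)))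
      = ENNReal.ofReal ((Real.pi / (u + t)) ^ ((n:ℝ) / 2)
          * Real.exp (-(u * t / (u + t) * ‖x‖ ^ 2))) := by
  have hut : (0:ℝ) < u + t := by positivity
  have step : ∀ y : EuclideanSpace ℝ (Fin n),
      ENNReal.ofReal (Real.exp (-(u * ‖y‖ ^ 2 + t * ‖x - y‖ ^ 2)))
        = ENNReal.ofReal (Real.exp (-((u + t) * ‖y - (t / (u + t)) • x‖ ^ 2)))
            * ENNReal.ofReal (Real.exp (-(u * t / (u + t) * ‖x‖ ^ 2))) := by
    intro y
    rw [← ENNReal.ofReal_mul (Real.exp_pos _).le, ← Real.exp_add]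
    congr 2
    rw [sq_complete hu ht x y]
    ring
  simp_rw [step]
  rw [lintegral_mul_const' _ _ ENNReal.ofReal_ne_top, lint_gauss n hut, ← ENNReal.ofReal_mul]
  positivity

lemma main_lint (n : ℕ) (hn : 1 ≤ n) {a γ : ℝ} (ha : 0 < a) (hγ : 0 < γ)
    (hn2 : (n:ℝ) / 2 = a + γ) (x : EuclideanSpace ℝ (Fin n)) :
    ∫⁻ y : EuclideanSpace ℝ (Fin n),
        ENNReal.ofReal ((1 + ‖y‖ ^ 2) ^ (-(a + 2 * γ)) * ‖x - y‖ ^ (-(2 * a)))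
      = ENNReal.ofReal (Real.pi ^ ((n:ℝ) / 2) * Real.Gamma γ / Real.Gamma (a + 2 * γ)
          * (1 + ‖x‖ ^ 2) ^ (-a)) := by
  have : Nonempty (Fin n) := ⟨⟨0, hn⟩⟩
  set s : ℝ := a + 2 * γ with hs_def
  set lam : ℝ := 1 + ‖x‖ ^ 2 with hlam_def
  have hs : 0 < s := by positivity
  have hlam : 0 < lam := by positivity
  have hGs : 0 < Real.Gamma s := Real.Gamma_pos_of_pos hs
  have hGa : 0 < Real.Gamma a := Real.Gamma_pos_of_pos ha
  have hGγ : 0 < Real.Gamma γ := Real.Gamma_pos_of_pos hγ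
  have hn2pos : (0:ℝ) < (n:ℝ) / 2 := by rw [hn2]; positivity
  have hGn : 0 < Real.Gamma ((n:ℝ) / 2) := Real.Gamma_pos_of_pos hn2pos
  set F1 : EuclideanSpace ℝ (Fin n) → ℝ → ℝ → ℝ := fun y u t =>
    (u ^ (s - 1) * Real.exp (-((1 + ‖y‖ ^ 2) * u))) *
      (t ^ (a - 1) * Real.exp (-(‖x - y‖ ^ 2 * t))) with hF1
  have measF1 : Measurable (fun z : (EuclideanSpace ℝ (Fin n) × ℝ) × ℝ => ENNReal.ofReal (F1 z.1.1 z.1.2 z.2)) := by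
    apply Measurable.ennreal_ofReal
    apply Measurable.mul
    · exact (measurable_fst.snd.pow_const _).mul
        (((measurable_const.add ((measurable_fst.fst.norm).pow_const 2)).mul
          measurable_fst.snd).neg.exp)
    · exact (measurable_snd.pow_const _).mul
        (((((measurable_const.sub measurable_fst.fst).norm).pow_const 2).mul
          measurable_snd).neg.exp)
  -- Step A: pointwise double-Gamma representation
  have stepA : ∀ y : EuclideanSpace ℝ (Fin n), y ≠ x →
      ∫⁻ u in Ioi (0:ℝ), ∫⁻ t in Ioi (0:ℝ), ENNReal.ofReal (F1 y u t)
        = ENNReal.ofReal (Real.Gamma s * Real.Gamma a) *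
            ENNReal.ofReal ((1 + ‖y‖ ^ 2) ^ (-s) * ‖x - y‖ ^ (-(2 * a))) := by
    intro y hy
    have hxy : (0:ℝ) < ‖x - y‖ ^ 2 := by
      have h := sub_ne_zero_of_ne (Ne.symm hy)
      exact pow_pos (norm_pos_iff.mpr h) 2
    have h1y : (0:ℝ) < 1 + ‖y‖ ^ 2 := by positivity
    have hnorm : (‖x - y‖ ^ 2 : ℝ) ^ (-a) = ‖x - y‖ ^ (-(2 * a)) := by
      rw [← Real.rpow_natCast ‖x - y‖ 2, ← Real.rpow_mul (norm_nonneg _)]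
      norm_num
    calc ∫⁻ u in Ioi (0:ℝ), ∫⁻ t in Ioi (0:ℝ), ENNReal.ofReal (F1 y u t)
        = ∫⁻ u in Ioi (0:ℝ), ENNReal.ofReal (Real.Gamma a * (‖x - y‖ ^ 2) ^ (-a)) *
            ENNReal.ofReal (u ^ (s - 1) * Real.exp (-((1 + ‖y‖ ^ 2) * u))) := by
          apply setLIntegral_congr_fun measurableSet_Ioi
          intro u hu
          have hu0 : (0:ℝ) < u := hu
          have : ∀ t : ℝ, ENNReal.ofReal (F1 y u t)
              = ENNReal.ofReal (u ^ (s - 1) * Real.exp (-((1 + ‖y‖ ^ 2) * u))) *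
                  ENNReal.ofReal (t ^ (a - 1) * Real.exp (-(‖x - y‖ ^ 2 * t))) := by
            intro t
            rw [hF1, ← ENNReal.ofReal_mul (by positivity)]
          simp_rw [this]
          rw [lintegral_const_mul' _ _ ENNReal.ofReal_ne_top, lint_gamma ha hxy, mul_comm]
      _ = ENNReal.ofReal (Real.Gamma a * (‖x - y‖ ^ 2) ^ (-a)) *
            ENNReal.ofReal (Real.Gamma s * (1 + ‖y‖ ^ 2) ^ (-s)) := by
          rw [lintegral_const_mul' _ _ ENNReal.ofReal_ne_top, lint_gamma hs h1y]
      _ = ENNReal.ofReal (Real.Gamma s * Real.Gamma a) *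
            ENNReal.ofReal ((1 + ‖y‖ ^ 2) ^ (-s) * ‖x - y‖ ^ (-(2 * a))) := by
          rw [← ENNReal.ofReal_mul (by positivity), ← ENNReal.ofReal_mul (by positivity),
            ← hnorm]
          congr 1
          ring
  -- after Gaussian integration
  set g : ℝ → ℝ → ℝ := fun u t =>
    (u ^ (s - 1) * t ^ (a - 1) * Real.exp (-u)) *
      ((Real.pi / (u + t)) ^ ((n:ℝ) / 2) * Real.exp (-(u * t / (u + t) * ‖x‖ ^ 2))) with hg
  have stepB : ∀ u ∈ Ioi (0:ℝ), ∀ t ∈ Ioi (0:ℝ),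
      (∫⁻ y : EuclideanSpace ℝ (Fin n), ENNReal.ofReal (F1 y u t)) = ENNReal.ofReal (g u t) := by
    intro u hu t ht
    have hu0 : (0:ℝ) < u := hu
    have ht0 : (0:ℝ) < t := ht
    have key : ∀ y : EuclideanSpace ℝ (Fin n), ENNReal.ofReal (F1 y u t)
        = ENNReal.ofReal (u ^ (s - 1) * t ^ (a - 1) * Real.exp (-u)) *
            ENNReal.ofReal (Real.exp (-(u * ‖y‖ ^ 2 + t * ‖x - y‖ ^ 2))) := by
      intro y
      rw [← ENNReal.ofReal_mul (by positivity), hF1]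
      simp only
      rw [show u ^ (s - 1) * Real.exp (-((1 + ‖y‖ ^ 2) * u)) *
            (t ^ (a - 1) * Real.exp (-(‖x - y‖ ^ 2 * t)))
          = u ^ (s - 1) * t ^ (a - 1) *
            Real.exp (-((1 + ‖y‖ ^ 2) * u) + -(‖x - y‖ ^ 2 * t)) from by
        rw [Real.exp_add]; ring]
      rw [show u ^ (s - 1) * t ^ (a - 1) * Real.exp (-u) *
            Real.exp (-(u * ‖y‖ ^ 2 + t * ‖x - y‖ ^ 2))
          = u ^ (s - 1) * t ^ (a - 1) *
            Real.exp (-u + -(u * ‖y‖ ^ 2 + t * ‖x - y‖ ^ 2)) from by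
        rw [Real.exp_add]; ring]
      congr 2
      ring
    simp_rw [key]
    rw [lintegral_const_mul' _ _ ENNReal.ofReal_ne_top, lint_gauss2 n hu0 ht0 x,
      ← ENNReal.ofReal_mul (by positivity), hg]
  have hae : ∀ᵐ y : EuclideanSpace ℝ (Fin n) ∂volume, y ≠ x := by
    rw [ae_iff]
    have hset : {y : EuclideanSpace ℝ (Fin n) | ¬ y ≠ x} = {x} := by ext y; simp
    rw [hset]
    exact measure_singleton x
  have big : ENNReal.ofReal (Real.Gamma s * Real.Gamma a) *
      (∫⁻ y : EuclideanSpace ℝ (Fin n), ENNReal.ofReal ((1 + ‖y‖ ^ 2) ^ (-s) * ‖x - y‖ ^ (-(2 * a))))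
      = ∫⁻ u in Ioi (0:ℝ), ∫⁻ t in Ioi (0:ℝ), ENNReal.ofReal (g u t) := by
    rw [← lintegral_const_mul' _ _ ENNReal.ofReal_ne_top]
    have e1 : (∫⁻ y : EuclideanSpace ℝ (Fin n), ENNReal.ofReal (Real.Gamma s * Real.Gamma a) *
          ENNReal.ofReal ((1 + ‖y‖ ^ 2) ^ (-s) * ‖x - y‖ ^ (-(2 * a))))
        = ∫⁻ y : EuclideanSpace ℝ (Fin n), ∫⁻ u in Ioi (0:ℝ), ∫⁻ t in Ioi (0:ℝ), ENNReal.ofReal (F1 y u t) :=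
      lintegral_congr_ae (hae.mono fun y hy => (stepA y hy).symm)
    rw [e1, lintegral_lintegral_swap (measF1.lintegral_prod_right').aemeasurable]
    apply setLIntegral_congr_fun measurableSet_Ioi
    intro u hu
    beta_reduce
    have m2 : AEMeasurable (fun z : EuclideanSpace ℝ (Fin n) × ℝ => ENNReal.ofReal (F1 z.1 u z.2))
        (volume.prod (volume.restrict (Ioi 0))) :=
      (measF1.comp ((measurable_fst.prodMk measurable_const).prodMk measurable_snd)).aemeasurable
    rw [lintegral_lintegral_swap m2]
    exact setLIntegral_congr_fun measurableSet_Ioi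
      (fun t ht => stepB u hu t ht)
  -- substitution t = u * v
  set h : ℝ → ℝ → ℝ := fun u v =>
    (Real.pi ^ ((n:ℝ) / 2) * (v ^ (a - 1) * (1 + v) ^ (-((n:ℝ) / 2)))) *
      (u ^ ((n:ℝ) / 2 - 1) * Real.exp (-((1 + lam * v) / (1 + v) * u))) with hh
  have measg : ∀ u : ℝ, Measurable fun t => ENNReal.ofReal (g u t) := by
    intro u
    apply Measurable.ennreal_ofReal
    exact ((measurable_const.mul (measurable_id'.pow_const _)).mul measurable_const).mul
      (((measurable_const.div (measurable_const.add measurable_id')).pow_const _).mul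
        ((((measurable_id'.const_mul u).div (measurable_const.add measurable_id')).mul
          measurable_const).neg.exp))
  have stepC : ∀ u ∈ Ioi (0:ℝ),
      (∫⁻ t in Ioi (0:ℝ), ENNReal.ofReal (g u t))
        = ∫⁻ v in Ioi (0:ℝ), ENNReal.ofReal (h u v) := by
    intro u hu
    have hu0 : (0:ℝ) < u := hu
    rw [lint_scale (measg u) hu0, ← lintegral_const_mul' _ _ ENNReal.ofReal_ne_top]
    apply setLIntegral_congr_fun measurableSet_Ioi
    intro v hv
    have hv0 : (0:ℝ) < v := hv
    have huv : (0:ℝ) < 1 + v := by positivity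
    beta_reduce
    rw [← ENNReal.ofReal_mul hu0.le]
    congr 1
    have h1 : (u * v) ^ (a - 1) = u ^ (a - 1) * v ^ (a - 1) := Real.mul_rpow hu0.le hv0.le
    have h2 : (Real.pi / (u + u * v)) ^ ((n:ℝ) / 2)
        = Real.pi ^ ((n:ℝ) / 2) * (1 + v) ^ (-((n:ℝ) / 2)) * u ^ (-((n:ℝ) / 2)) := by
      have e0 : Real.pi / (u + u * v) = Real.pi * (1 + v)⁻¹ * u⁻¹ := by
        rw [show u + u * v = (1 + v) * u from by ring, div_eq_mul_inv, mul_inv, ← mul_assoc]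
      rw [e0, Real.mul_rpow (by positivity) (by positivity),
        Real.mul_rpow (by positivity) (by positivity),
        Real.inv_rpow huv.le, Real.inv_rpow hu0.le,
        ← Real.rpow_neg huv.le, ← Real.rpow_neg hu0.le]
    have h3 : Real.exp (-(u * (u * v) / (u + u * v) * ‖x‖ ^ 2)) * Real.exp (-u)
        = Real.exp (-((1 + lam * v) / (1 + v) * u)) := by
      rw [← Real.exp_add]
      congr 1
      have hx2 : ‖x‖ ^ 2 = lam - 1 := by rw [hlam_def]; ring
      rw [hx2]
      field_simp
      ring
    have h4 : u ^ (s - 1) * u ^ (a - 1) * u ^ (-((n:ℝ) / 2)) * u = u ^ ((n:ℝ) / 2 - 1) := by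
      nth_rewrite 4 [← Real.rpow_one u]
      rw [← Real.rpow_add hu0, ← Real.rpow_add hu0, ← Real.rpow_add hu0]
      congr 1
      rw [hs_def]
      linarith [hn2]
    rw [hg, hh]
    simp only
    rw [h1, h2, ← h3, ← h4]
    ring
  have meash : Measurable (Function.uncurry fun u v : ℝ => ENNReal.ofReal (h u v)) := by
    apply Measurable.ennreal_ofReal
    exact (measurable_const.mul ((measurable_snd.pow_const _).mul
        ((measurable_const.add measurable_snd).pow_const _))).mul
      ((measurable_fst.pow_const _).mul
        ((((measurable_const.add (measurable_snd.const_mul lam)).div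
          (measurable_const.add measurable_snd)).mul measurable_fst).neg.exp))
  have stepE : ∀ v ∈ Ioi (0:ℝ),
      (∫⁻ u in Ioi (0:ℝ), ENNReal.ofReal (h u v))
        = ENNReal.ofReal (Real.pi ^ ((n:ℝ) / 2) * Real.Gamma ((n:ℝ) / 2)) *
            ENNReal.ofReal (v ^ (a - 1) * (1 + lam * v) ^ (-((n:ℝ) / 2))) := by
    intro v hv
    have hv0 : (0:ℝ) < v := hv
    have huv : (0:ℝ) < 1 + v := by positivity
    have hr : (0:ℝ) < (1 + lam * v) / (1 + v) := by positivity
    have key : ∀ u : ℝ, ENNReal.ofReal (h u v)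
        = ENNReal.ofReal (Real.pi ^ ((n:ℝ) / 2) * (v ^ (a - 1) * (1 + v) ^ (-((n:ℝ) / 2)))) *
            ENNReal.ofReal (u ^ ((n:ℝ) / 2 - 1) *
              Real.exp (-((1 + lam * v) / (1 + v) * u))) := by
      intro u
      rw [← ENNReal.ofReal_mul (by positivity), hh]
    simp_rw [key]
    rw [lintegral_const_mul' _ _ ENNReal.ofReal_ne_top, lint_gamma hn2pos hr,
      ← ENNReal.ofReal_mul (by positivity), ← ENNReal.ofReal_mul (by positivity)]
    congr 1
    have hcol : (1 + v) ^ (-((n:ℝ) / 2)) * ((1 + lam * v) / (1 + v)) ^ (-((n:ℝ) / 2))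
        = (1 + lam * v) ^ (-((n:ℝ) / 2)) := by
      rw [← Real.mul_rpow huv.le hr.le]
      congr 1
      field_simp
    rw [← hcol]
    ring
  have halt : a < (n:ℝ) / 2 := by rw [hn2]; linarith
  have hγeq : (n:ℝ) / 2 - a = γ := by linarith [hn2]
  -- put everything together
  apply (ENNReal.mul_right_inj
    (ENNReal.ofReal_pos.mpr (by positivity : (0:ℝ) < Real.Gamma s * Real.Gamma a)).ne'
    ENNReal.ofReal_ne_top).mp
  rw [big, setLIntegral_congr_fun measurableSet_Ioi stepC,
    lintegral_lintegral_swap meash.aemeasurable,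
    setLIntegral_congr_fun measurableSet_Ioi stepE,
    lintegral_const_mul' _ _ ENNReal.ofReal_ne_top, lint_beta ha halt hlam, hγeq,
    ← ENNReal.ofReal_mul (by positivity), ← ENNReal.ofReal_mul (by positivity)]
  congr 1
  field_simp

theorem stmt18 (n : ℕ) (hn : 1 ≤ n) (γ : ℝ) (hγ : 0 < γ) (hγn : γ < (n : ℝ) / 2)
    (p : ℝ) (hp : p = ((n : ℝ) + 2 * γ) / ((n : ℝ) - 2 * γ)) :
    ∃ α : ℝ, 0 < α ∧
      ∀ x : EuclideanSpace ℝ (Fin n),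
        Integrable (fun y : EuclideanSpace ℝ (Fin n) =>
          (α * (1 + ‖y‖ ^ 2) ^ (-(((n : ℝ) - 2 * γ) / 2))) ^ p *
            ‖x - y‖ ^ (-((n : ℝ) - 2 * γ))) ∧
        α * (1 + ‖x‖ ^ 2) ^ (-(((n : ℝ) - 2 * γ) / 2)) =
          (Real.Gamma (((n : ℝ) - 2 * γ) / 2) /
              ((4 : ℝ) ^ γ * Real.pi ^ ((n : ℝ) / 2) * Real.Gamma γ)) *
            ∫ y : EuclideanSpace ℝ (Fin n),
              (α * (1 + ‖y‖ ^ 2) ^ (-(((n : ℝ) - 2 * γ) / 2))) ^ p *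
                ‖x - y‖ ^ (-((n : ℝ) - 2 * γ)) := by
  have h2γ : 2 * γ < (n:ℝ) := by linarith
  have hne : (n:ℝ) - 2 * γ ≠ 0 := by linarith
  set a : ℝ := ((n:ℝ) - 2 * γ) / 2 with ha_def
  have ha : 0 < a := by rw [ha_def]; linarith
  have hn2 : (n:ℝ) / 2 = a + γ := by rw [ha_def]; ring
  have hGa : 0 < Real.Gamma a := Real.Gamma_pos_of_pos ha
  have hGγ : 0 < Real.Gamma γ := Real.Gamma_pos_of_pos hγ
  have hGs : 0 < Real.Gamma (a + 2 * γ) := Real.Gamma_pos_of_pos (by positivity)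
  have h4γ : (0:ℝ) < (4:ℝ) ^ γ := Real.rpow_pos_of_pos (by norm_num) γ
  have hπ : (0:ℝ) < Real.pi ^ ((n:ℝ) / 2) := Real.rpow_pos_of_pos Real.pi_pos _
  set β : ℝ := (4:ℝ) ^ γ * Real.Gamma (a + 2 * γ) / Real.Gamma a with hβ_def
  have hβ : 0 < β := by rw [hβ_def]; positivity
  have hp1 : p - 1 = 4 * γ / ((n:ℝ) - 2 * γ) := by rw [hp]; field_simp; ring
  have hp1pos : 0 < p - 1 := by rw [hp1]; exact div_pos (by linarith) (by linarith)
  set α : ℝ := β ^ (1 / (p - 1)) with hα_def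
  have hα0 : 0 < α := Real.rpow_pos_of_pos hβ _
  have hαpow : α ^ (p - 1) = β := by
    rw [hα_def, ← Real.rpow_mul hβ.le, one_div, inv_mul_cancel₀ hp1pos.ne', Real.rpow_one]
  have hαp : α ^ p = β * α := by
    rw [show p = (p - 1) + 1 from by ring, Real.rpow_add hα0, hαpow, Real.rpow_one]
  refine ⟨α, hα0, fun x => ?_⟩
  have hap : -a * p = -(a + 2 * γ) := by
    rw [hp, ha_def]
    field_simp
    ring
  have hexp2 : -((n:ℝ) - 2 * γ) = -(2 * a) := by rw [ha_def]; ring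
  have hfeq : ∀ y : EuclideanSpace ℝ (Fin n),
      (α * (1 + ‖y‖ ^ 2) ^ (-a)) ^ p * ‖x - y‖ ^ (-((n:ℝ) - 2 * γ))
        = α ^ p * ((1 + ‖y‖ ^ 2) ^ (-(a + 2 * γ)) * ‖x - y‖ ^ (-(2 * a))) := by
    intro y
    rw [Real.mul_rpow hα0.le (Real.rpow_nonneg (by positivity) _),
      ← Real.rpow_mul (by positivity : (0:ℝ) ≤ 1 + ‖y‖ ^ 2), hap, hexp2]
    ring
  have hnn : ∀ y : EuclideanSpace ℝ (Fin n),
      0 ≤ (α * (1 + ‖y‖ ^ 2) ^ (-a)) ^ p * ‖x - y‖ ^ (-((n:ℝ) - 2 * γ)) := by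
    intro y
    exact mul_nonneg (Real.rpow_nonneg (by positivity) _)
      (Real.rpow_nonneg (norm_nonneg _) _)
  have mf : Measurable (fun y : EuclideanSpace ℝ (Fin n) =>
      (α * (1 + ‖y‖ ^ 2) ^ (-a)) ^ p * ‖x - y‖ ^ (-((n:ℝ) - 2 * γ))) := by
    exact ((measurable_const.mul
        ((measurable_const.add (measurable_norm.pow_const 2)).pow_const _)).pow_const _).mul
      (((measurable_const.sub measurable_id).norm).pow_const _)
  have hmain := main_lint n hn ha hγ hn2 x
  have hlf : (∫⁻ y : EuclideanSpace ℝ (Fin n), ENNReal.ofReal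
        ((α * (1 + ‖y‖ ^ 2) ^ (-a)) ^ p * ‖x - y‖ ^ (-((n:ℝ) - 2 * γ))))
      = ENNReal.ofReal (α ^ p) * ENNReal.ofReal (Real.pi ^ ((n:ℝ) / 2) * Real.Gamma γ /
          Real.Gamma (a + 2 * γ) * (1 + ‖x‖ ^ 2) ^ (-a)) := by
    rw [lintegral_congr (fun y => by
      rw [hfeq y, ENNReal.ofReal_mul (Real.rpow_nonneg hα0.le _)]),
      lintegral_const_mul' _ _ ENNReal.ofReal_ne_top, hmain]
  have hInt : Integrable (fun y : EuclideanSpace ℝ (Fin n) =>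
      (α * (1 + ‖y‖ ^ 2) ^ (-a)) ^ p * ‖x - y‖ ^ (-((n:ℝ) - 2 * γ))) := by
    refine ⟨mf.aestronglyMeasurable, ?_⟩
    rw [hasFiniteIntegral_iff_ofReal (Filter.Eventually.of_forall hnn), hlf]
    exact ENNReal.mul_lt_top ENNReal.ofReal_lt_top ENNReal.ofReal_lt_top
  refine ⟨hInt, ?_⟩
  have hint : (∫ y : EuclideanSpace ℝ (Fin n),
        (α * (1 + ‖y‖ ^ 2) ^ (-a)) ^ p * ‖x - y‖ ^ (-((n:ℝ) - 2 * γ)))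
      = α ^ p * (Real.pi ^ ((n:ℝ) / 2) * Real.Gamma γ /
          Real.Gamma (a + 2 * γ) * (1 + ‖x‖ ^ 2) ^ (-a)) := by
    rw [integral_eq_lintegral_of_nonneg_ae (Filter.Eventually.of_forall hnn)
      mf.aestronglyMeasurable, hlf, ← ENNReal.ofReal_mul (Real.rpow_nonneg hα0.le _),
      ENNReal.toReal_ofReal (by positivity)]
  rw [hint, hαp, hβ_def]
  field_simp
end
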